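/- arXiv:1405.6332 — 8 statements merged into one kernel-verified Lean document; each statement's English description precedes it below -/
import Mathlib

section
/- Let ω: ℝ → ℝ be continuous with ω(t)/t → 0 as t → ±∞, λ > 0, δ > 0, and β continuous with 0 < β₀ ≤ β(t) ≤ β₁. Define x⁺_λ(τ, ω) = (2 ∫_{-∞}^0 e^{2λr + 2δω(r)} β(r+τ) dr)^{-1/2}. Then x⁺_λ is tempered: for every c > 0 and τ ∈ ℝ, e^{ct} x⁺_λ(τ + t, θ_t ω) → 0 as t → −∞, where θ_t ω(s) = ω(s+t) − ω(t). -/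
set_option autoImplicit false
set_option maxHeartbeats 1000000

open MeasureTheory Filter Real Set

lemma aux_integrableOn_exp_mul {a : ℝ} (ha : 0 < a) (b : ℝ) :
    IntegrableOn (fun x => Real.exp (a * x)) (Iic b) := by
  have hcont : Continuous fun x => Real.exp (a * x) :=
    Real.continuous_exp.comp (continuous_const.mul continuous_id)
  refine integrableOn_Iic_of_intervalIntegral_norm_bounded
    (Real.exp (a*b)/a) b (fun i => hcont.integrableOn_Ioc) tendsto_id ?_
  filter_upwards [eventually_le_atBot b] with y hy
  have hderiv : ∀ x ∈ Set.uIcc y b,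
      HasDerivAt (fun u => Real.exp (a*u)/a) (Real.exp (a*x)) x := by
    intro x _
    have h := (((hasDerivAt_id x).const_mul a).exp).div_const a
    simpa [mul_div_assoc, mul_div_cancel_left₀ _ ha.ne', div_self ha.ne'] using h
  have key : (∫ x in y..b, ‖Real.exp (a*x)‖)
      = (Real.exp (a*b) - Real.exp (a*y))/a := by
    simp only [Real.norm_of_nonneg (Real.exp_pos _).le]
    rw [intervalIntegral.integral_eq_sub_of_hasDerivAt hderiv
      (hcont.intervalIntegrable y b)]
    ring
  simp only [id]
  rw [key]
  have h1 : (0:ℝ) ≤ Real.exp (a*y) := (Real.exp_pos _).le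
  gcongr
  linarith

lemma aux_sublin (ω : ℝ → ℝ) (hωc : Continuous ω)
    (h1 : Tendsto (fun t => ω t / t) atTop (nhds 0))
    (h2 : Tendsto (fun t => ω t / t) atBot (nhds 0))
    {ε : ℝ} (hε : 0 < ε) : ∃ M : ℝ, 0 ≤ M ∧ ∀ s, |ω s| ≤ ε * |s| + M := by
  have h1' : ∀ᶠ t in atTop, |ω t| / |t| < ε := by
    have := Metric.tendsto_nhds.mp h1 ε hε
    simpa [Real.dist_eq] using this
  have h2' : ∀ᶠ t in atBot, |ω t| / |t| < ε := by
    have := Metric.tendsto_nhds.mp h2 ε hε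
    simpa [Real.dist_eq] using this
  obtain ⟨A, hA⟩ := eventually_atTop.mp h1'
  obtain ⟨B, hB⟩ := eventually_atBot.mp h2'
  set A' := max A 1 with hA'
  set B' := min B (-1) with hB'
  have hBA : B' ≤ A' := le_trans (min_le_right _ _) (by
    have := le_max_right A 1; linarith)
  obtain ⟨x₀, hx₀, hub⟩ := (isCompact_Icc (a := B') (b := A')).exists_isMaxOn
    (Set.nonempty_Icc.mpr hBA) (continuous_abs.comp hωc).continuousOn
  refine ⟨|ω x₀|, abs_nonneg _, fun s => ?_⟩
  rcases le_or_gt s A' with hsA | hsA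
  · rcases le_or_gt B' s with hsB | hsB
    · have := isMaxOn_iff.mp hub s ⟨hsB, hsA⟩
      have hε' : 0 ≤ ε * |s| := mul_nonneg hε.le (abs_nonneg _)
      calc |ω s| ≤ |ω x₀| := this
        _ ≤ ε * |s| + |ω x₀| := by linarith
    · have hs1 : s ≤ B := lt_of_lt_of_le hsB (min_le_left _ _) |>.le
      have hsneg : s < 0 := lt_of_lt_of_le hsB (by
        have := min_le_right B (-1); linarith)
      have habs : |ω s| / |s| < ε := hB s hs1
      have hspos : 0 < |s| := abs_pos.mpr hsneg.ne
      rw [div_lt_iff₀ hspos] at habs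
      nlinarith [abs_nonneg (ω x₀)]
  · have hs1 : A ≤ s := le_trans (le_max_left A 1) hsA.le
    have hspos' : (0:ℝ) < s := lt_of_lt_of_le (by norm_num : (0:ℝ) < 1)
      (le_trans (le_max_right A 1) hsA.le)
    have habs : |ω s| / |s| < ε := hA s hs1
    have hspos : 0 < |s| := abs_pos.mpr hspos'.ne'
    rw [div_lt_iff₀ hspos] at habs
    nlinarith [abs_nonneg (ω x₀)]

/-- Temperedness of the bifurcating branch x⁺_λ:
e^{ct} x⁺_λ(τ+t, θ_t ω) → 0 as t → -∞ for every c > 0. -/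
theorem stmt3
    (ω : ℝ → ℝ) (hωc : Continuous ω)
    (hωtop : Tendsto (fun t => ω t / t) atTop (nhds 0))
    (hωbot : Tendsto (fun t => ω t / t) atBot (nhds 0))
    (lam δ β₀ β₁ : ℝ) (hlam : 0 < lam) (hδ : 0 < δ)
    (β : ℝ → ℝ) (hβc : Continuous β)
    (hβ₀ : 0 < β₀) (hβl : ∀ t, β₀ ≤ β t) (hβu : ∀ t, β t ≤ β₁)
    (xplus : ℝ → (ℝ → ℝ) → ℝ)
    (hx : ∀ (τ : ℝ) (ω' : ℝ → ℝ),
      xplus τ ω' =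
        (Real.sqrt (2 * ∫ r in Iic (0 : ℝ),
          Real.exp (2 * lam * r + 2 * δ * ω' r) * β (r + τ)))⁻¹) :
    ∀ c > (0 : ℝ), ∀ τ : ℝ,
      Tendsto (fun t => Real.exp (c * t) * xplus (τ + t) (fun s => ω (s + t) - ω t))
        atBot (nhds 0) := by
  intro c hc τ
  have hmpos : 0 < min lam (c/2) := lt_min hlam (by linarith)
  set ε := min lam (c/2) / (2*δ) with hεdef
  have hεpos : 0 < ε := div_pos hmpos (by linarith)
  set b := 2*δ*ε with hbdef
  have hbm : b = min lam (c/2) := by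
    rw [hbdef, hεdef]; field_simp
  have hbpos : 0 < b := by rw [hbm]; exact hmpos
  have hblam : b ≤ lam := by rw [hbm]; exact min_le_left _ _
  have hbc : b ≤ c/2 := by rw [hbm]; exact min_le_right _ _
  obtain ⟨M, hM0, hM⟩ := aux_sublin ω hωc hωtop hωbot hεpos
  set K := β₀ * Real.exp (-(2*lam + b + 4*δ*M)) with hKdef
  have hKpos : 0 < K := mul_pos hβ₀ (Real.exp_pos _)
  -- pointwise sublinear bounds multiplied by 2δ
  have hup : ∀ s ≤ (0:ℝ), 2*δ*(ω s) ≤ b*(-s) + 2*δ*M ∧ -(b*(-s) + 2*δ*M) ≤ 2*δ*(ω s) := by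
    intro s hs
    have h1 := hM s
    have habs : |s| = -s := abs_of_nonpos hs
    rw [habs] at h1
    have h2 := abs_le.mp h1
    constructor
    · calc 2*δ*(ω s) ≤ 2*δ*(ε*(-s) + M) := by
            apply mul_le_mul_of_nonneg_left h2.2 (by linarith)
        _ = b*(-s) + 2*δ*M := by rw [hbdef]; ring
    · calc -(b*(-s) + 2*δ*M) = 2*δ*(-(ε*(-s) + M)) := by rw [hbdef]; ring
        _ ≤ 2*δ*(ω s) := by apply mul_le_mul_of_nonneg_left h2.1 (by linarith)
  -- the key lower bound on the integral
  have key : ∀ t ≤ (0:ℝ),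
      K * Real.exp (2*b*t) ≤ ∫ r in Iic (0:ℝ),
        Real.exp (2*lam*r + 2*δ*(ω (r+t) - ω t)) * β (r + (τ+t)) := by
    intro t ht
    set g : ℝ → ℝ :=
      fun r => Real.exp (2*lam*r + 2*δ*(ω (r+t) - ω t)) * β (r + (τ+t)) with hgdef
    have hgcont : Continuous g := by
      apply Continuous.mul
      · exact Real.continuous_exp.comp (by continuity)
      · exact hβc.comp (by continuity)
    have hgnonneg : ∀ r, 0 ≤ g r :=
      fun r => mul_nonneg (Real.exp_pos _).le (le_trans hβ₀.le (hβl _))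
    have hωt := hup t ht
    -- integrability on Iic 0
    have hint : IntegrableOn g (Iic (0:ℝ)) := by
      set C := β₁ * Real.exp (2*b*(-t) + 4*δ*M) with hCdef
      have hCpos : 0 < C := by
        apply mul_pos (lt_of_lt_of_le hβ₀ (le_trans (hβl 0) (hβu 0))) (Real.exp_pos _)
      have hCi : IntegrableOn (fun r => C * Real.exp ((2*lam - b) * r)) (Iic (0:ℝ)) :=
        (aux_integrableOn_exp_mul (by linarith) 0).const_mul C
      refine Integrable.mono hCi hgcont.aestronglyMeasurable ?_
      rw [ae_restrict_iff' measurableSet_Iic]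
      filter_upwards with r hr
      have hr' : r ≤ 0 := Set.mem_Iic.mp hr
      have hωrt := hup (r+t) (by linarith)
      have hE : 2*lam*r + 2*δ*(ω (r+t) - ω t)
          ≤ (2*lam - b)*r + (2*b*(-t) + 4*δ*M) := by
        have e1 := hωrt.1
        have e2 := hωt.2
        linarith
      rw [Real.norm_of_nonneg (hgnonneg r),
        Real.norm_of_nonneg (by positivity : (0:ℝ) ≤ C * Real.exp ((2*lam - b) * r))]
      calc g r ≤ Real.exp (2*lam*r + 2*δ*(ω (r+t) - ω t)) * β₁ := by
            apply mul_le_mul_of_nonneg_left (hβu _) (Real.exp_pos _).le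
        _ ≤ Real.exp ((2*lam - b)*r + (2*b*(-t) + 4*δ*M)) * β₁ := by
            apply mul_le_mul_of_nonneg_right (Real.exp_le_exp.mpr hE)
            exact le_trans hβ₀.le (le_trans (hβl 0) (hβu 0))
        _ = C * Real.exp ((2*lam - b) * r) := by
            rw [hCdef, Real.exp_add]; ring
    -- pointwise lower bound on [-1,0]
    have hlow : ∀ r ∈ Icc (-1:ℝ) 0, K * Real.exp (2*b*t) ≤ g r := by
      intro r hr
      have hωrt := hup (r+t) (by linarith [hr.2])
      have hE2 : -(2*lam + b + 4*δ*M) + 2*b*t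
          ≤ 2*lam*r + 2*δ*(ω (r+t) - ω t) := by
        have e1 := hωrt.2
        have e2 := hωt.1
        have e3 : b*(-1) ≤ b*r := mul_le_mul_of_nonneg_left hr.1 hbpos.le
        have e4 : (2*lam)*(-1) ≤ (2*lam)*r :=
          mul_le_mul_of_nonneg_left hr.1 (by linarith)
        linarith
      calc K * Real.exp (2*b*t)
          = Real.exp (-(2*lam + b + 4*δ*M) + 2*b*t) * β₀ := by
            rw [hKdef, Real.exp_add]; ring
        _ ≤ Real.exp (2*lam*r + 2*δ*(ω (r+t) - ω t)) * β₀ := by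
            apply mul_le_mul_of_nonneg_right (Real.exp_le_exp.mpr hE2) hβ₀.le
        _ ≤ g r := by
            apply mul_le_mul_of_nonneg_left (hβl _) (Real.exp_pos _).le
    calc K * Real.exp (2*b*t)
        = ∫ _ in Icc (-1:ℝ) 0, K * Real.exp (2*b*t) := by
          rw [setIntegral_const]
          rw [Real.volume_real_Icc]
          norm_num
      _ ≤ ∫ r in Icc (-1:ℝ) 0, g r := by
          apply setIntegral_mono_on
          · exact integrableOn_const (by rw [Real.volume_Icc]; norm_num)
          · exact hint.mono_set Icc_subset_Iic_self
          · exact measurableSet_Icc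
          · exact hlow
      _ ≤ ∫ r in Iic (0:ℝ), g r := by
          apply setIntegral_mono_set hint (ae_of_all _ hgnonneg)
          exact HasSubset.Subset.eventuallyLE Icc_subset_Iic_self
  -- squeeze
  apply squeeze_zero' (g := fun t => Real.exp ((c - b)*t) / Real.sqrt (2*K))
  · filter_upwards with t
    rw [hx]
    positivity
  · filter_upwards [eventually_le_atBot (0:ℝ)] with t ht
    have hI := key t ht
    simp only [hx]
    have hIpos : (0:ℝ) < 2 * (K * Real.exp (2*b*t)) := by positivity
    have hsq : Real.sqrt (2*(K*Real.exp (2*b*t)))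
        ≤ Real.sqrt (2 * ∫ r in Iic (0:ℝ),
          Real.exp (2*lam*r + 2*δ*(ω (r+t) - ω t)) * β (r + (τ+t))) :=
      Real.sqrt_le_sqrt (by linarith)
    have hsqpos : 0 < Real.sqrt (2*(K*Real.exp (2*b*t))) := Real.sqrt_pos.mpr hIpos
    have hstep : Real.exp (c*t) * (Real.sqrt (2 * ∫ r in Iic (0:ℝ),
          Real.exp (2*lam*r + 2*δ*(ω (r+t) - ω t)) * β (r + (τ+t))))⁻¹
        ≤ Real.exp (c*t) * (Real.sqrt (2*(K*Real.exp (2*b*t))))⁻¹ := by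
      apply mul_le_mul_of_nonneg_left (inv_anti₀ hsqpos hsq) (Real.exp_pos _).le
    refine hstep.trans (le_of_eq ?_)
    have hexp : Real.exp (b*t) * Real.exp (b*t) = Real.exp (2*b*t) := by
      rw [← Real.exp_add]; congr 1; ring
    have h2 : (2:ℝ)*(K*Real.exp (2*b*t)) = (2*K)*(Real.exp (b*t)*Real.exp (b*t)) := by
      rw [hexp]; ring
    rw [h2, Real.sqrt_mul (by positivity), Real.sqrt_mul_self (Real.exp_pos _).le]
    rw [show (c-b)*t = c*t - b*t from by ring, Real.exp_sub]
    rw [mul_inv]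
    field_simp
  · have h1 : Tendsto (fun t : ℝ => (c - b)*t) atBot atBot :=
      tendsto_id.const_mul_atBot (by linarith)
    have h2 : Tendsto (fun t : ℝ => Real.exp ((c - b)*t)) atBot (nhds 0) :=
      Real.tendsto_exp_atBot.comp h1
    simpa using h2.div_const (Real.sqrt (2*K))
end

section
/- Let ω: ℝ → ℝ be continuous with ω(t)/t → 0 as t → ±∞, δ > 0, and β continuous with 0 < β₀ ≤ β(t) ≤ β₁. For λ > 0, τ ∈ ℝ, and initial value x₀ > 0, the explicit solution x(τ, τ−t, θ_{−τ}ω, x₀) = x₀ / √(e^{−2λt + 2δω(−t)} + 2x₀² ∫_{−t}^0 e^{2λr + 2δω(r)} β(r+τ) dr) converges, as t → ∞, to x⁺_λ(τ,ω) = (2 ∫_{-∞}^0 e^{2λr + 2δω(r)} β(r+τ) dr)^{-1/2}. -/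
set_option autoImplicit false

open MeasureTheory Filter Real Set

lemma intExpIic (c R : ℝ) (hc : 0 < c) :
    IntegrableOn (fun r => Real.exp (c * r)) (Iic R) := by
  have h1 : Integrable ((Iic (c * R)).indicator Real.exp) :=
    (integrable_indicator_iff measurableSet_Iic).2 (integrableOn_exp_Iic _)
  have h2 := h1.comp_mul_left' hc.ne'
  rw [← integrable_indicator_iff measurableSet_Iic]
  refine h2.congr (ae_of_all _ fun r => ?_)
  by_cases h : r ≤ R
  · simp [indicator, h, (mul_le_mul_iff_right₀ hc).2 h]
  · have : ¬ c * r ≤ c * R := by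
      rw [mul_le_mul_iff_right₀ hc]; exact h
    simp [indicator, h, this]

/-- Pullback convergence of the explicit solution with positive initial data
to the positive branch x⁺_λ(τ,ω). -/
theorem stmt4
    (ω : ℝ → ℝ) (hωc : Continuous ω)
    (hωtop : Tendsto (fun t => ω t / t) atTop (nhds 0))
    (hωbot : Tendsto (fun t => ω t / t) atBot (nhds 0))
    (lam δ β₀ β₁ : ℝ) (hlam : 0 < lam) (hδ : 0 < δ)
    (β : ℝ → ℝ) (hβc : Continuous β)
    (hβ₀ : 0 < β₀) (hβl : ∀ t, β₀ ≤ β t) (hβu : ∀ t, β t ≤ β₁)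
    (τ x₀ : ℝ) (hx₀ : 0 < x₀) :
    Tendsto
      (fun t : ℝ =>
        x₀ / Real.sqrt (Real.exp (-2 * lam * t + 2 * δ * ω (-t)) +
          2 * x₀ ^ 2 *
            ∫ r in Ioc (-t) (0 : ℝ), Real.exp (2 * lam * r + 2 * δ * ω r) * β (r + τ)))
      atTop
      (nhds ((Real.sqrt (2 * ∫ r in Iic (0 : ℝ),
        Real.exp (2 * lam * r + 2 * δ * ω r) * β (r + τ)))⁻¹)) := by
  set f : ℝ → ℝ := fun r => Real.exp (2 * lam * r + 2 * δ * ω r) * β (r + τ) with hf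
  have hfc : Continuous f := by
    apply Continuous.mul
    · exact Real.continuous_exp.comp (by continuity)
    · exact hβc.comp (by continuity)
  have hfpos : ∀ r, 0 < f r := fun r =>
    mul_pos (Real.exp_pos _) (lt_of_lt_of_le hβ₀ (hβl _))
  -- sublinearity bound at -∞
  have hε : (0:ℝ) < lam / (2 * δ) := div_pos hlam (by positivity)
  obtain ⟨R, hR⟩ : ∃ R, ∀ r ≤ R, |ω r / r| ≤ lam / (2 * δ) := by
    have := (hωbot.abs.eventually (eventually_le_nhds (by simpa using hε)))
    simpa using eventually_atBot.1 this
  have hbound : ∀ r ≤ min R (-1), 2 * δ * ω r ≤ -lam * r := by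
    intro r hr
    have hrneg : r < 0 := lt_of_le_of_lt (hr.trans (min_le_right _ _)) (by norm_num)
    have h1 : |ω r| ≤ lam / (2 * δ) * |r| := by
      have := hR r (le_trans hr (min_le_left _ _))
      rwa [abs_div, div_le_iff₀ (abs_pos.2 hrneg.ne)] at this
    have h2 : ω r ≤ lam / (2 * δ) * (-r) := by
      calc ω r ≤ |ω r| := le_abs_self _
        _ ≤ lam / (2 * δ) * |r| := h1
        _ = lam / (2 * δ) * (-r) := by rw [abs_of_neg hrneg]
    calc 2 * δ * ω r ≤ 2 * δ * (lam / (2 * δ) * (-r)) := by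
          exact mul_le_mul_of_nonneg_left h2 (by positivity)
      _ = -lam * r := by field_simp
  -- integrability
  set R0 := min R (-1) with hR0
  have hR0le : R0 ≤ 0 := le_trans (min_le_right _ _) (by norm_num)
  have hint : IntegrableOn f (Iic 0) := by
    have h1 : IntegrableOn f (Iic R0) := by
      refine Integrable.mono' ((intExpIic lam R0 hlam).const_mul β₁)
        hfc.aestronglyMeasurable.restrict ?_
      refine (ae_restrict_iff' measurableSet_Iic).2 (ae_of_all _ fun r hr => ?_)
      have hr' : r ≤ R0 := hr
      have hb := hbound r hr'
      have : f r ≤ β₁ * Real.exp (lam * r) := by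
        have he : Real.exp (2 * lam * r + 2 * δ * ω r) ≤ Real.exp (lam * r) := by
          apply Real.exp_le_exp.2; nlinarith
        calc f r ≤ Real.exp (2 * lam * r + 2 * δ * ω r) * β₁ :=
              mul_le_mul_of_nonneg_left (hβu _) (Real.exp_pos _).le
          _ ≤ Real.exp (lam * r) * β₁ :=
              mul_le_mul_of_nonneg_right he (le_trans hβ₀.le (hβl 0) |>.trans (hβu 0) |> fun h => le_trans hβ₀.le ((hβl 0).trans (hβu 0)))
          _ = β₁ * Real.exp (lam * r) := mul_comm _ _
      rwa [Real.norm_eq_abs, abs_of_pos (hfpos r)]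
    have h2 : IntegrableOn f (Icc R0 0) := hfc.continuousOn.integrableOn_Icc
    have := h1.union h2
    rwa [Iic_union_Icc_eq_Iic hR0le] at this
  -- positivity of the limit integral
  set I := ∫ r in Iic (0:ℝ), f r with hI
  have hIpos : 0 < I := by
    rw [hI, setIntegral_pos_iff_support_of_nonneg_ae
      (ae_of_all _ fun r => (hfpos r).le) hint]
    have hsupp : Function.support f ∩ Iic 0 = Iic 0 := by
      apply inter_eq_right.2
      intro r _
      exact (hfpos r).ne'
    rw [hsupp, Real.volume_Iic]
    exact ENNReal.zero_lt_top
  -- convergence of the integral term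
  have hIconv : Tendsto (fun t : ℝ => ∫ r in Ioc (-t) (0:ℝ), f r) atTop (nhds I) := by
    have h1 : Tendsto (fun t : ℝ => ∫ r in (-t)..(0:ℝ), f r) atTop (nhds I) :=
      intervalIntegral_tendsto_integral_Iic 0 hint tendsto_neg_atTop_atBot
    apply h1.congr'
    filter_upwards [eventually_ge_atTop (0:ℝ)] with t ht
    rw [intervalIntegral.integral_of_le (by linarith)]
  -- convergence of the exponential term
  have hEconv : Tendsto (fun t : ℝ => Real.exp (-2 * lam * t + 2 * δ * ω (-t)))
      atTop (nhds 0) := by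
    apply Real.tendsto_exp_atBot.comp
    have hq : Tendsto (fun t : ℝ => ω (-t) / (-t)) atTop (nhds 0) :=
      hωbot.comp tendsto_neg_atTop_atBot
    have hq' : Tendsto (fun t : ℝ => -2 * lam + 2 * δ * (-(ω (-t) / (-t)))) atTop
        (nhds (-2 * lam)) := by
      have := (hq.neg.const_mul (2 * δ)).const_add (-2 * lam)
      simpa using this
    have hmul : Tendsto (fun t : ℝ => (-2 * lam + 2 * δ * (-(ω (-t) / (-t)))) * t)
        atTop atBot :=
      Tendsto.neg_mul_atTop (by linarith) hq' tendsto_id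
    apply hmul.congr'
    filter_upwards [eventually_gt_atTop (0:ℝ)] with t ht
    have htne : t ≠ 0 := ht.ne'
    field_simp
  -- combine
  have hden : Tendsto (fun t : ℝ => Real.exp (-2 * lam * t + 2 * δ * ω (-t)) +
      2 * x₀ ^ 2 * ∫ r in Ioc (-t) (0:ℝ), f r) atTop (nhds (0 + 2 * x₀ ^ 2 * I)) :=
    hEconv.add (hIconv.const_mul _)
  have hdenpos : (0:ℝ) < 2 * x₀ ^ 2 * I := by positivity
  have hsq : Tendsto (fun t : ℝ => Real.sqrt (Real.exp (-2 * lam * t + 2 * δ * ω (-t)) +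
      2 * x₀ ^ 2 * ∫ r in Ioc (-t) (0:ℝ), f r)) atTop
      (nhds (Real.sqrt (2 * x₀ ^ 2 * I))) := by
    have := (Real.continuous_sqrt.tendsto _).comp hden
    simpa [Function.comp_def] using this
  have hsne : Real.sqrt (2 * x₀ ^ 2 * I) ≠ 0 :=
    (Real.sqrt_pos.2 hdenpos).ne'
  have hfinal := Tendsto.div (tendsto_const_nhds (x := x₀) (f := atTop)) hsq hsne
  have hval : x₀ / Real.sqrt (2 * x₀ ^ 2 * I) = (Real.sqrt (2 * I))⁻¹ := by
    have h1 : 2 * x₀ ^ 2 * I = x₀ ^ 2 * (2 * I) := by ring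
    rw [h1, Real.sqrt_mul (sq_nonneg x₀), Real.sqrt_sq hx₀.le, div_mul_eq_div_div,
      div_self hx₀.ne', one_div]
  rw [← hval]
  exact hfinal
end

section
/- Let ω: ℝ → ℝ be continuous with ∫_{−∞}^0 e^{2δω(r)} dr = ∞, δ > 0, and β continuous with β(t) ≥ β₀ > 0. For λ = 0, every solution with initial value x₀ ∈ ℝ satisfies |x(τ, τ−t, θ_{−τ}ω, x₀)| ≤ (2β₀ ∫_{−t}^0 e^{2δω(r)} dr)^{−1/2} → 0 as t → ∞. Hence the zero solution of dx/dt = −β(t)x³ + δx∘dω/dt is pullback attracting in ℝ. -/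
set_option autoImplicit false

open MeasureTheory Filter Real Set

lemma aux_tendsto (f : ℝ → ℝ) (hfc : Continuous f) (hfpos : ∀ r, 0 < f r)
    (hdiv : ∫⁻ r in Iic (0 : ℝ), ENNReal.ofReal (f r) = ⊤) :
    Tendsto (fun t : ℝ => ∫ r in Ioc (-t) (0 : ℝ), f r) atTop atTop := by
  set I : ℝ → ℝ := fun t => ∫ r in Ioc (-t) (0 : ℝ), f r with hI
  have hint : ∀ t : ℝ, IntegrableOn f (Ioc (-t) 0) := fun t =>
    hfc.integrableOn_Ioc
  have hmono : ∀ {s t : ℝ}, s ≤ t → I s ≤ I t := by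
    intro s t hst
    apply setIntegral_mono_set (hint t)
    · exact Filter.Eventually.of_forall fun r => (hfpos r).le
    · exact HasSubset.Subset.eventuallyLE (Ioc_subset_Ioc_left (by linarith))
  -- the union
  have hunion : Iic (0:ℝ) = ⋃ n : ℕ, Ioc (-(n:ℝ)) 0 := by
    ext r
    simp only [mem_Iic, mem_iUnion, mem_Ioc]
    constructor
    · intro hr
      obtain ⟨n, hn⟩ := exists_nat_gt (-r)
      exact ⟨n, by linarith, hr⟩
    · rintro ⟨n, _, h⟩; exact h
  set ν := volume.withDensity (fun r => ENNReal.ofReal (f r)) with hν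
  have hmeas : Measurable fun r => ENNReal.ofReal (f r) :=
    (ENNReal.measurable_ofReal.comp hfc.measurable)
  have hνIoc : ∀ n : ℕ, ν (Ioc (-(n:ℝ)) 0) = ENNReal.ofReal (I n) := by
    intro n
    rw [hν, withDensity_apply _ measurableSet_Ioc,
      ← ofReal_integral_eq_lintegral_ofReal (hint n)
        (Filter.Eventually.of_forall fun r => (hfpos r).le)]
  have hνIic : ν (Iic (0:ℝ)) = ⊤ := by
    rw [hν, withDensity_apply _ measurableSet_Iic, hdiv]
  have hsup : (⨆ n : ℕ, ENNReal.ofReal (I n)) = ⊤ := by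
    have hdir : Monotone fun n : ℕ => Ioc (-(n:ℝ)) 0 := by
      intro n m hnm
      exact Ioc_subset_Ioc_left (by exact_mod_cast neg_le_neg (Nat.cast_le.2 hnm))
    calc (⨆ n : ℕ, ENNReal.ofReal (I n)) = ⨆ n : ℕ, ν (Ioc (-(n:ℝ)) 0) := by
          simp [hνIoc]
      _ = ν (⋃ n : ℕ, Ioc (-(n:ℝ)) 0) := hdir.directed_le.measure_iUnion.symm
      _ = ⊤ := by rw [← hunion, hνIic]
  rw [tendsto_atTop]
  intro C
  have hex : ∃ n : ℕ, C < I n := by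
    by_contra h
    push_neg at h
    have : (⨆ n : ℕ, ENNReal.ofReal (I n)) ≤ ENNReal.ofReal C :=
      iSup_le fun n => ENNReal.ofReal_le_ofReal (h n)
    rw [hsup] at this
    exact (ENNReal.ofReal_ne_top) (top_le_iff.mp this)
  obtain ⟨n, hn⟩ := hex
  filter_upwards [eventually_ge_atTop (n:ℝ)] with t ht
  exact hn.le.trans (hmono ht)

/-- λ = 0 case: the pullback solution is bounded by (2β₀∫_{-t}^0 e^{2δω})^{-1/2},
which tends to 0, so the zero solution is pullback attracting. -/
theorem stmt7
    (ω : ℝ → ℝ) (hωc : Continuous ω)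
    (δ β₀ : ℝ) (hδ : 0 < δ) (hβ₀ : 0 < β₀)
    (hdiv : ∫⁻ r in Iic (0 : ℝ), ENNReal.ofReal (Real.exp (2 * δ * ω r)) = ⊤)
    (β : ℝ → ℝ) (hβc : Continuous β) (hβl : ∀ t, β₀ ≤ β t)
    (τ x₀ : ℝ)
    (x : ℝ → ℝ)
    (hx : ∀ t : ℝ,
      x t = x₀ / Real.sqrt (Real.exp (2 * δ * ω (-t)) +
        2 * x₀ ^ 2 * ∫ r in Ioc (-t) (0 : ℝ), Real.exp (2 * δ * ω r) * β (r + τ))) :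
    (∀ t > (0 : ℝ),
        |x t| ≤ (Real.sqrt (2 * β₀ * ∫ r in Ioc (-t) (0 : ℝ), Real.exp (2 * δ * ω r)))⁻¹) ∧
    Tendsto (fun t => (Real.sqrt (2 * β₀ *
        ∫ r in Ioc (-t) (0 : ℝ), Real.exp (2 * δ * ω r)))⁻¹) atTop (nhds 0) ∧
    Tendsto x atTop (nhds 0) := by
  set f : ℝ → ℝ := fun r => Real.exp (2 * δ * ω r) with hf
  have hfc : Continuous f := Real.continuous_exp.comp (by continuity)
  have hfpos : ∀ r, 0 < f r := fun r => Real.exp_pos _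
  set g : ℝ → ℝ := fun r => f r * β (r + τ) with hg
  have hgc : Continuous g := hfc.mul (hβc.comp (by continuity))
  have hfint : ∀ t : ℝ, IntegrableOn f (Ioc (-t) 0) := fun t => hfc.integrableOn_Ioc
  have hgint : ∀ t : ℝ, IntegrableOn g (Ioc (-t) 0) := fun t => hgc.integrableOn_Ioc
  set I : ℝ → ℝ := fun t => ∫ r in Ioc (-t) (0:ℝ), f r with hI
  set J : ℝ → ℝ := fun t => ∫ r in Ioc (-t) (0:ℝ), g r with hJ
  have hJI : ∀ t : ℝ, β₀ * I t ≤ J t := by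
    intro t
    rw [hI, hJ]
    simp only
    rw [← integral_const_mul]
    apply setIntegral_mono_on ((hfint t).const_mul β₀) (hgint t) measurableSet_Ioc
    intro r _
    have := hfpos r
    have := hβl (r + τ)
    calc β₀ * f r = f r * β₀ := by ring
      _ ≤ f r * β (r + τ) := by nlinarith
  have hIpos : ∀ t > (0:ℝ), 0 < I t := by
    intro t ht
    rw [hI]
    simp only
    rw [← intervalIntegral.integral_of_le (by linarith : (-t) ≤ 0)]
    apply intervalIntegral.intervalIntegral_pos_of_pos_on
      (hfc.intervalIntegrable _ _) (fun r _ => hfpos r) (by linarith)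
  have hbound : ∀ t > (0:ℝ), |x t| ≤ (Real.sqrt (2 * β₀ * I t))⁻¹ := by
    intro t ht
    have hIt := hIpos t ht
    have hB : (0:ℝ) < 2 * β₀ * I t := by positivity
    have hden : 0 < f (-t) + 2 * x₀ ^ 2 * J t := by
      have h1 : 0 ≤ J t := le_trans (by nlinarith [hIt]) (hJI t)
      nlinarith [hfpos (-t)]
    rw [hx t, abs_div, abs_of_nonneg (Real.sqrt_nonneg _)]
    rw [div_le_iff₀ (Real.sqrt_pos.2 hden), inv_mul_eq_div,
      le_div_iff₀ (Real.sqrt_pos.2 hB)]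
    calc |x₀| * Real.sqrt (2 * β₀ * I t)
        = Real.sqrt (x₀ ^ 2) * Real.sqrt (2 * β₀ * I t) := by
          rw [Real.sqrt_sq_eq_abs]
      _ = Real.sqrt (x₀ ^ 2 * (2 * β₀ * I t)) := (Real.sqrt_mul (sq_nonneg _) _).symm
      _ ≤ Real.sqrt (f (-t) + 2 * x₀ ^ 2 * J t) := by
          apply Real.sqrt_le_sqrt
          have := hJI t
          nlinarith [hfpos (-t), sq_nonneg x₀]
  have hItend : Tendsto I atTop atTop := aux_tendsto f hfc hfpos hdiv
  have hBtend : Tendsto (fun t => 2 * β₀ * I t) atTop atTop :=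
    hItend.const_mul_atTop (by positivity)
  have hsqrt : Tendsto (fun t => Real.sqrt (2 * β₀ * I t)) atTop atTop := by
    rw [tendsto_atTop]
    intro C
    filter_upwards [hBtend.eventually_ge_atTop (C ^ 2)] with t h
    calc C ≤ |C| := le_abs_self C
      _ = Real.sqrt (C ^ 2) := (Real.sqrt_sq_eq_abs C).symm
      _ ≤ Real.sqrt (2 * β₀ * I t) := Real.sqrt_le_sqrt h
  have h2 : Tendsto (fun t => (Real.sqrt (2 * β₀ * I t))⁻¹) atTop (nhds 0) :=
    hsqrt.inv_tendsto_atTop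
  refine ⟨hbound, h2, ?_⟩
  refine (tendsto_zero_iff_abs_tendsto_zero x).mpr ?_
  apply squeeze_zero' (Filter.Eventually.of_forall fun t => abs_nonneg _) _ h2
  filter_upwards [eventually_gt_atTop (0:ℝ)] with t ht
  exact hbound t ht
end

section
/- Let ω: ℝ → ℝ be continuous with ∫_{−∞}^0 e^{2δω(r)} dr = ∞ and ω(t)/t → 0 as t → ±∞, δ > 0, and β continuous with 0 < β₀ ≤ β ≤ β₁. Define for λ > 0: x⁺_λ(τ) = (2∫_{−∞}^0 e^{2λr + 2δω(r)} β(r+τ) dr)^{−1/2}. Then for every τ ∈ ℝ, x⁺_λ(τ) → 0 as λ → 0⁺. -/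
set_option autoImplicit false
set_option maxHeartbeats 1000000

open MeasureTheory Filter Real Set Topology
open scoped ENNReal

/-- Pitchfork bifurcation: the branch x⁺_λ(τ) tends to 0 as λ → 0⁺. -/
theorem stmt8
    (ω : ℝ → ℝ) (hωc : Continuous ω)
    (hωtop : Tendsto (fun t => ω t / t) atTop (nhds 0))
    (hωbot : Tendsto (fun t => ω t / t) atBot (nhds 0))
    (δ β₀ β₁ : ℝ) (hδ : 0 < δ)
    (hdiv : ∫⁻ r in Iic (0 : ℝ), ENNReal.ofReal (Real.exp (2 * δ * ω r)) = ⊤)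
    (β : ℝ → ℝ) (hβc : Continuous β)
    (hβ₀ : 0 < β₀) (hβl : ∀ t, β₀ ≤ β t) (hβu : ∀ t, β t ≤ β₁)
    (τ : ℝ) :
    Tendsto
      (fun lam : ℝ =>
        (Real.sqrt (2 * ∫ r in Iic (0 : ℝ),
          Real.exp (2 * lam * r + 2 * δ * ω r) * β (r + τ)))⁻¹)
      (nhdsWithin 0 (Ioi 0)) (nhds 0) := by
  have hβ₁pos : 0 < β₁ := hβ₀.trans_le ((hβl 0).trans (hβu 0))
  set g : ℝ → ℝ := fun r => Real.exp (2 * δ * ω r) with hgdef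
  have hgc : Continuous g := (Real.continuous_exp.comp (continuous_const.mul hωc))
  set F : ℝ → ℝ → ℝ := fun lam r => Real.exp (2 * lam * r + 2 * δ * ω r) * β (r + τ)
    with hFdef
  have hFc : ∀ lam, Continuous (F lam) := by
    intro lam
    exact (Real.continuous_exp.comp
      (((continuous_const.mul continuous_id).add (continuous_const.mul hωc)))).mul
      (hβc.comp (continuous_id.add continuous_const))
  have hFnonneg : ∀ lam r, 0 ≤ F lam r := fun lam r =>
    mul_nonneg (Real.exp_pos _).le ((hβ₀.trans_le (hβl _)).le)
  -- Integrability of F lam on Iic 0 for lam > 0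
  have hInt : ∀ lam : ℝ, 0 < lam → IntegrableOn (F lam) (Iic (0 : ℝ)) := by
    intro lam hlam
    have hεpos : 0 < lam / (2 * δ) := by positivity
    have hev : ∀ᶠ y in 𝓝 (0 : ℝ), |y| < lam / (2 * δ) := by
      simpa using eventually_abs_sub_lt (0 : ℝ) hεpos
    obtain ⟨R₀, hR₀⟩ := eventually_atBot.mp (hωbot.eventually hev)
    set R : ℝ := min R₀ (-1) with hRdef
    have hR0 : R ≤ 0 := le_trans (min_le_right _ _) (by norm_num)
    have hbound : ∀ r ≤ R, F lam r ≤ β₁ * Real.exp (lam * r) := by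
      intro r hr
      have hrneg : r < 0 := lt_of_le_of_lt (hr.trans (min_le_right _ _)) (by norm_num)
      have habs := hR₀ r (hr.trans (min_le_left _ _))
      have h1 : |ω r| < lam / (2 * δ) * |r| := by
        have hrne : r ≠ 0 := hrneg.ne
        have := (div_lt_iff₀ (abs_pos.mpr hrne)).mp (by rwa [abs_div] at habs)
        linarith [this]
      have h2 : ω r ≤ lam / (2 * δ) * (-r) := by
        rw [abs_of_neg hrneg] at h1
        calc ω r ≤ |ω r| := le_abs_self _
          _ ≤ lam / (2 * δ) * (-r) := h1.le
      have h3 : 2 * lam * r + 2 * δ * ω r ≤ lam * r := by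
        have : 2 * δ * ω r ≤ 2 * δ * (lam / (2 * δ) * (-r)) := by
          apply mul_le_mul_of_nonneg_left h2 (by positivity)
        have heq : 2 * δ * (lam / (2 * δ) * (-r)) = -(lam * r) := by
          field_simp
        nlinarith [this]
      calc F lam r ≤ Real.exp (2 * lam * r + 2 * δ * ω r) * β₁ :=
            mul_le_mul_of_nonneg_left (hβu _) (Real.exp_pos _).le
        _ ≤ Real.exp (lam * r) * β₁ :=
            mul_le_mul_of_nonneg_right (Real.exp_le_exp.mpr h3) hβ₁pos.le
        _ = β₁ * Real.exp (lam * r) := mul_comm _ _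
    have hexp : IntegrableOn (fun r => Real.exp (lam * r)) (Iic R) := by
      have h1 : Integrable ((Iic (lam * R)).indicator Real.exp) :=
        (integrable_indicator_iff measurableSet_Iic).mpr (integrableOn_exp_Iic (lam * R))
      have h2 : Integrable (fun x => (Iic (lam * R)).indicator Real.exp (lam * x)) :=
        h1.comp_mul_left' hlam.ne'
      apply (integrable_indicator_iff measurableSet_Iic).mp
      convert h2 using 1
      · rfl
      funext x
      by_cases hx : x ≤ R
      · rw [indicator_of_mem (mem_Iic.mpr hx),
          indicator_of_mem (mem_Iic.mpr (by nlinarith : lam * x ≤ lam * R))]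
      · rw [indicator_of_notMem (fun h => hx (mem_Iic.mp h)),
          indicator_of_notMem (fun h => hx ?_)]
        have := mem_Iic.mp h
        exact le_of_mul_le_mul_left this hlam
    have hIicR : IntegrableOn (F lam) (Iic R) := by
      refine Integrable.mono' (hexp.const_mul β₁) ((hFc lam).aestronglyMeasurable) ?_
      refine (ae_restrict_iff' measurableSet_Iic).mpr (ae_of_all _ fun r hr => ?_)
      rw [Real.norm_eq_abs, abs_of_nonneg (hFnonneg lam r)]
      exact hbound r hr
    have hIcc : IntegrableOn (F lam) (Icc R 0) := (hFc lam).integrableOn_Icc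
    have := hIicR.union hIcc
    rwa [Iic_union_Icc_eq_Iic hR0] at this
  -- Divergence: big compact pieces of ∫ g are arbitrarily large
  have key : ∀ C : ℝ, ∃ n : ℕ, C ≤ ∫ r in Icc (-(n : ℝ)) 0, g r := by
    intro C
    set f : ℕ → ℝ → ℝ≥0∞ := fun n => (Icc (-(n : ℝ)) 0).indicator
      (fun x => ENNReal.ofReal (g x)) with hfdef
    have hmeas : ∀ n, Measurable (f n) :=
      fun n => (ENNReal.measurable_ofReal.comp hgc.measurable).indicator measurableSet_Icc
    have hmono : Monotone f := by
      intro m n hmn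
      exact indicator_le_indicator_of_subset
        (Icc_subset_Icc (neg_le_neg (Nat.cast_le.mpr hmn)) le_rfl) (fun _ => zero_le)
    have hsup : (fun x => ⨆ n, f n x)
        = (Iic (0 : ℝ)).indicator (fun x => ENNReal.ofReal (g x)) := by
      funext x
      by_cases hx : x ≤ 0
      · obtain ⟨n, hn⟩ := exists_nat_ge (-x)
        apply le_antisymm
        · exact iSup_le fun m => indicator_le_indicator_of_subset
            (fun y hy => hy.2) (fun _ => zero_le) x
        · rw [indicator_of_mem (mem_Iic.mpr hx)]
          calc ENNReal.ofReal (g x) = f n x := by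
                rw [hfdef]; simp only
                rw [indicator_of_mem (mem_Icc.mpr ⟨by linarith, hx⟩)]
            _ ≤ ⨆ m, f m x := le_iSup (fun m => f m x) n
      · have h1 : ∀ n, f n x = 0 := fun n =>
          indicator_of_notMem (fun h => hx (mem_Icc.mp h).2) _
        simp [h1, indicator_of_notMem (fun h => hx (mem_Iic.mp h))]
    have htop : (⨆ n, ∫⁻ x, f n x) = ⊤ := by
      rw [← lintegral_iSup hmeas hmono]
      calc ∫⁻ x, ⨆ n, f n x
          = ∫⁻ x, (Iic (0:ℝ)).indicator (fun x => ENNReal.ofReal (g x)) x := by rw [hsup]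
        _ = ∫⁻ x in Iic (0:ℝ), ENNReal.ofReal (g x) :=
            lintegral_indicator measurableSet_Iic _
        _ = ⊤ := hdiv
    have hlt : ENNReal.ofReal C < ⨆ n, ∫⁻ x, f n x := by
      rw [htop]; exact ENNReal.ofReal_lt_top
    obtain ⟨n, hn⟩ := lt_iSup_iff.mp hlt
    refine ⟨n, ?_⟩
    have hgeq : ∫⁻ x, f n x = ∫⁻ x in Icc (-(n:ℝ)) 0, ENNReal.ofReal (g x) :=
      lintegral_indicator measurableSet_Icc _
    have hgint : IntegrableOn g (Icc (-(n:ℝ)) 0) := hgc.integrableOn_Icc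
    have hofReal : ENNReal.ofReal (∫ r in Icc (-(n:ℝ)) 0, g r)
        = ∫⁻ x in Icc (-(n:ℝ)) 0, ENNReal.ofReal (g x) :=
      ofReal_integral_eq_lintegral_ofReal hgint (ae_of_all _ fun x => (Real.exp_pos _).le)
    have hCC : ENNReal.ofReal C < ENNReal.ofReal (∫ r in Icc (-(n:ℝ)) 0, g r) := by
      rw [hofReal, ← hgeq]; exact hn
    rcases le_or_gt C 0 with hC | hC
    · exact hC.trans (setIntegral_nonneg measurableSet_Icc
        fun x _ => (Real.exp_pos _).le)
    · exact ((ENNReal.ofReal_lt_ofReal_iff_of_nonneg hC.le).mp hCC).le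
  -- Main: 2 * integral tends to atTop
  have main : Tendsto (fun lam : ℝ => 2 * ∫ r in Iic (0 : ℝ), F lam r)
      (nhdsWithin 0 (Ioi 0)) atTop := by
    rw [tendsto_atTop]
    intro b
    obtain ⟨n, hn⟩ := key (b / β₀)
    set K : ℝ := ∫ r in Icc (-(n:ℝ)) 0, g r with hKdef
    set ε : ℝ := Real.log 2 / (2 * ((n : ℝ) + 1)) with hεdef
    have hεpos : 0 < ε := by
      apply div_pos (Real.log_pos (by norm_num)); positivity
    filter_upwards [Ioc_mem_nhdsGT_of_mem (⟨le_refl (0:ℝ), hεpos⟩ : (0:ℝ) ∈ Ico 0 ε)]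
      with lam hlam
    obtain ⟨hlam0, hlamε⟩ := hlam
    -- pointwise: on Icc (-n) 0, F lam r ≥ (β₀/2) * g r
    have hpt : ∀ r ∈ Icc (-(n:ℝ)) 0, β₀ / 2 * g r ≤ F lam r := by
      intro r hr
      obtain ⟨hr1, hr2⟩ := mem_Icc.mp hr
      have hexp2 : Real.exp (-Real.log 2) ≤ Real.exp (2 * lam * r) := by
        apply Real.exp_le_exp.mpr
        have h1 : 2 * lam * r ≥ -(2 * lam * (n:ℝ)) := by nlinarith
        have h2 : 2 * lam * (n:ℝ) ≤ Real.log 2 := by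
          have : lam * (2 * ((n:ℝ) + 1)) ≤ Real.log 2 := by
            rw [hεdef] at hlamε
            have := (le_div_iff₀ (by positivity : (0:ℝ) < 2 * ((n:ℝ)+1))).mp hlamε
            linarith [this]
          nlinarith [hlam0.le, Nat.cast_nonneg (α := ℝ) n]
        linarith
      have hhalf : Real.exp (-Real.log 2) = 1 / 2 := by
        rw [Real.exp_neg, Real.exp_log (by norm_num : (0:ℝ) < 2)]
        norm_num
      have hFsplit : F lam r = Real.exp (2 * lam * r) * g r * β (r + τ) := by
        rw [hFdef, hgdef]; simp only [← Real.exp_add]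
      rw [hFsplit]
      have hgpos : 0 < g r := Real.exp_pos _
      have hβpos : β₀ ≤ β (r + τ) := hβl _
      have he : (1:ℝ)/2 ≤ Real.exp (2 * lam * r) := hhalf ▸ hexp2
      have hstep : 1 / 2 * g r * β₀ ≤ Real.exp (2 * lam * r) * g r * β (r + τ) := by
        apply mul_le_mul _ hβpos hβ₀.le (by positivity)
        exact mul_le_mul_of_nonneg_right he hgpos.le
      linarith
    have hgKint : IntegrableOn (fun r => β₀ / 2 * g r) (Icc (-(n:ℝ)) 0) :=
      (hgc.integrableOn_Icc).const_mul _
    have hFIcc : IntegrableOn (F lam) (Icc (-(n:ℝ)) 0) := (hFc lam).integrableOn_Icc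
    have step1 : β₀ / 2 * K ≤ ∫ r in Icc (-(n:ℝ)) 0, F lam r := by
      rw [hKdef, ← integral_const_mul]
      exact setIntegral_mono_on hgKint hFIcc measurableSet_Icc hpt
    have step2 : ∫ r in Icc (-(n:ℝ)) 0, F lam r ≤ ∫ r in Iic (0:ℝ), F lam r := by
      apply setIntegral_mono_set (hInt lam hlam0)
        (ae_of_all _ fun r => hFnonneg lam r)
      exact HasSubset.Subset.eventuallyLE (fun y hy => (mem_Icc.mp hy).2)
    have hbK : b ≤ β₀ * K := by
      have := (div_le_iff₀ hβ₀).mp hn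
      linarith [this]
    linarith [step1, step2, hbK]
  have hsqrtTop : Tendsto Real.sqrt atTop atTop := by
    rw [tendsto_atTop]
    intro b
    filter_upwards [eventually_ge_atTop (b ^ 2)] with x hx
    calc b ≤ |b| := le_abs_self b
      _ = Real.sqrt (b ^ 2) := (Real.sqrt_sq_eq_abs b).symm
      _ ≤ Real.sqrt x := Real.sqrt_le_sqrt hx
  exact (hsqrtTop.comp main).inv_tendsto_atTop
end

section
/- Let ω: ℝ → ℝ be continuous with ω(t)/t → 0 as t → ±∞, λ > 0, δ > 0, and suppose β: ℝ → ℝ is continuous, almost automorphic, and satisfies 0 < β₀ ≤ β(t) ≤ β₁ for all t. Then x⁺_λ(τ) = (2∫_{−∞}^0 e^{2λr + 2δω(r)} β(r+τ) dr)^{−1/2} is almost automorphic in τ. -/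
set_option autoImplicit false

open MeasureTheory Filter Real Set

/-- Almost automorphy: every sequence has a subsequence along which the
translates converge pointwise to a function whose back-translates converge
back to f. -/
def AlmostAutomorphic (f : ℝ → ℝ) : Prop :=
  ∀ s : ℕ → ℝ, ∃ φ : ℕ → ℕ, StrictMono φ ∧ ∃ h : ℝ → ℝ,
    (∀ t : ℝ, Tendsto (fun m => f (t + s (φ m))) atTop (nhds (h t))) ∧
    (∀ t : ℝ, Tendsto (fun m => h (t - s (φ m))) atTop (nhds (f t)))

lemma exp_mul_integrableOn_Iic {lam : ℝ} (hlam : 0 < lam) :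
    IntegrableOn (fun r : ℝ => Real.exp (lam * r)) (Iic (0 : ℝ)) := by
  have h1 : IntegrableOn (fun x : ℝ => Real.exp (-lam * x)) (Ioi (0 : ℝ)) :=
    exp_neg_integrableOn_Ioi 0 hlam
  have h2 : Integrable ((Ioi (0:ℝ)).indicator fun x : ℝ => Real.exp (-lam * x)) := by
    rwa [integrable_indicator_iff measurableSet_Ioi]
  have h3 : Integrable (fun x : ℝ =>
      ((Ioi (0:ℝ)).indicator fun x : ℝ => Real.exp (-lam * x)) (-x)) := h2.comp_neg
  have h4 : (fun x : ℝ => ((Ioi (0:ℝ)).indicator fun x : ℝ => Real.exp (-lam * x)) (-x))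
      = (Iio (0:ℝ)).indicator (fun r : ℝ => Real.exp (lam * r)) := by
    ext x
    simp only [Set.indicator_apply, mem_Ioi, mem_Iio]
    by_cases hx : x < 0
    · rw [if_pos (neg_pos.mpr hx), if_pos hx]
      congr 1; ring
    · rw [if_neg (by simpa using hx), if_neg hx]
  rw [h4] at h3
  have h5 : IntegrableOn (fun r : ℝ => Real.exp (lam * r)) (Iio (0 : ℝ)) := by
    rwa [← integrable_indicator_iff measurableSet_Iio]
  have : Iic (0:ℝ) =ᵐ[volume] Iio (0:ℝ) := Iio_ae_eq_Iic.symm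
  exact h5.congr_set_ae this

/-- The weight function is integrable on `Iic 0`. -/
lemma weight_integrable (ω : ℝ → ℝ) (hωc : Continuous ω)
    (hωbot : Tendsto (fun t => ω t / t) atBot (nhds 0))
    {lam δ : ℝ} (hlam : 0 < lam) (hδ : 0 < δ) :
    IntegrableOn (fun r : ℝ => Real.exp (2 * lam * r + 2 * δ * ω r)) (Iic (0 : ℝ)) := by
  -- eventually at -∞, |ω t / t| < lam/(2δ)
  have hε : (0:ℝ) < lam / (2 * δ) := by positivity
  have h1 : ∀ᶠ t in atBot, |ω t / t| < lam / (2 * δ) := by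
    have := hωbot.abs
    simp only [abs_zero] at this
    exact this.eventually (gt_mem_nhds hε)
  obtain ⟨M, hM⟩ := eventually_atBot.mp h1
  set M' : ℝ := min M (-1) with hM'def
  have hM'neg : M' < 0 := lt_of_le_of_lt (min_le_right _ _) (by norm_num)
  have hbd : ∀ r ≤ M', 2 * lam * r + 2 * δ * ω r ≤ lam * r := by
    intro r hr
    have hrM : r ≤ M := le_trans hr (min_le_left _ _)
    have hrneg : r < 0 := lt_of_le_of_lt hr hM'neg
    have h2 := hM r hrM
    have habs : |ω r| < lam / (2 * δ) * |r| := by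
      have : |ω r / r| * |r| < lam / (2 * δ) * |r| := by
        apply mul_lt_mul_of_pos_right h2 (abs_pos.mpr hrneg.ne)
      calc |ω r| = |ω r / r| * |r| := by
            rw [abs_div, div_mul_cancel₀ _ (abs_ne_zero.mpr hrneg.ne)]
        _ < _ := this
    have : 2 * δ * ω r ≤ 2 * δ * |ω r| := by
      have := le_abs_self (ω r); nlinarith
    have h3 : 2 * δ * |ω r| ≤ lam * |r| := by
      have h2δ : (0:ℝ) < 2 * δ := by linarith
      have := habs.le
      calc 2 * δ * |ω r| ≤ 2 * δ * (lam / (2 * δ) * |r|) := by nlinarith [abs_nonneg (ω r)]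
        _ = lam * |r| := by field_simp
    have h4 : |r| = -r := abs_of_neg hrneg
    nlinarith
  -- on [M', 0] bound by continuity
  obtain ⟨C₀, hC₀⟩ := (IsCompact.exists_bound_of_continuousOn (isCompact_Icc (a := M') (b := 0))
    ((hωc.comp continuous_id).continuousOn (s := Icc M' 0)))
  set C : ℝ := max 0 (2 * δ * C₀ + (2 * lam + lam) * (-M')) with hCdef
  have hC0 : 0 ≤ C := le_max_left _ _
  have hbd2 : ∀ r ∈ Iic (0:ℝ), 2 * lam * r + 2 * δ * ω r ≤ lam * r + C := by
    intro r hr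
    rcases le_or_gt r M' with h | h
    · have := hbd r h; linarith
    · have hr0 : r ≤ 0 := hr
      have hmem : r ∈ Icc M' 0 := ⟨h.le, hr0⟩
      have hωr : |ω r| ≤ C₀ := by simpa using hC₀ r hmem
      have h1 : 2 * δ * ω r ≤ 2 * δ * C₀ := by
        have := le_abs_self (ω r); nlinarith
      have h2 : 2 * lam * r - lam * r = lam * r := by ring
      have h3 : lam * r ≤ lam * (-M') := by nlinarith
      have hC : 2 * δ * C₀ + (2 * lam + lam) * (-M') ≤ C := le_max_right _ _
      nlinarith
  apply Integrable.mono' (g := fun r : ℝ => Real.exp C * Real.exp (lam * r))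
  · exact (exp_mul_integrableOn_Iic hlam).const_mul _
  · exact (Continuous.aestronglyMeasurable (by continuity)).restrict
  · filter_upwards [ae_restrict_mem measurableSet_Iic] with r hr
    rw [Real.norm_eq_abs, abs_of_pos (Real.exp_pos _), ← Real.exp_add]
    exact Real.exp_le_exp.mpr (by have := hbd2 r hr; linarith)

/-- If β is almost automorphic, so is the branch
x⁺_λ(τ) = (2∫_{-∞}^0 e^{2λr+2δω(r)} β(r+τ) dr)^{-1/2}. -/
theorem stmt11
    (ω : ℝ → ℝ) (hωc : Continuous ω)
    (hωtop : Tendsto (fun t => ω t / t) atTop (nhds 0))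
    (hωbot : Tendsto (fun t => ω t / t) atBot (nhds 0))
    (lam δ β₀ β₁ : ℝ) (hlam : 0 < lam) (hδ : 0 < δ)
    (β : ℝ → ℝ) (hβc : Continuous β)
    (hβ₀ : 0 < β₀) (hβl : ∀ t, β₀ ≤ β t) (hβu : ∀ t, β t ≤ β₁)
    (hβaa : AlmostAutomorphic β) :
    AlmostAutomorphic
      (fun τ => (Real.sqrt (2 * ∫ r in Iic (0 : ℝ),
        Real.exp (2 * lam * r + 2 * δ * ω r) * β (r + τ)))⁻¹) := by
  set E : ℝ → ℝ := fun r => Real.exp (2 * lam * r + 2 * δ * ω r) with hEdef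
  have hEc : Continuous E := by continuity
  have hEpos : ∀ r, 0 < E r := fun r => Real.exp_pos _
  have hEint : IntegrableOn E (Iic (0:ℝ)) := weight_integrable ω hωc hωbot hlam hδ
  have hEIpos : 0 < ∫ r in Iic (0:ℝ), E r := by
    rw [setIntegral_pos_iff_support_of_nonneg_ae]
    · have : (Function.support E) ∩ Iic (0:ℝ) = Iic (0:ℝ) := by
        ext x; simp [Function.support, (hEpos x).ne']
      rw [this]
      simp
    · filter_upwards with r using (hEpos r).le
    · exact hEint
  -- key convergence lemma
  have key : ∀ (g : ℕ → ℝ → ℝ) (G : ℝ → ℝ),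
      (∀ m, Measurable (g m)) →
      (∀ m t, 0 ≤ g m t) → (∀ m t, g m t ≤ β₁) →
      (∀ t, Tendsto (fun m => g m t) atTop (nhds (G t))) →
      (∀ t, β₀ ≤ G t) →
      Tendsto (fun m => (Real.sqrt (2 * ∫ r in Iic (0:ℝ), E r * g m r))⁻¹) atTop
        (nhds ((Real.sqrt (2 * ∫ r in Iic (0:ℝ), E r * G r))⁻¹)) := by
    intro g G hgm hg0 hg1 hglim hGl
    have hint : Tendsto (fun m => ∫ r in Iic (0:ℝ), E r * g m r) atTop
        (nhds (∫ r in Iic (0:ℝ), E r * G r)) := by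
      apply tendsto_integral_of_dominated_convergence (bound := fun r => E r * β₁)
      · intro m
        exact ((hEc.measurable.mul (hgm m)).aestronglyMeasurable).restrict
      · exact hEint.mul_const _
      · intro m
        filter_upwards with r
        rw [Real.norm_eq_abs, abs_of_nonneg (mul_nonneg (hEpos r).le (hg0 m r))]
        exact mul_le_mul_of_nonneg_left (hg1 m r) (hEpos r).le
      · filter_upwards with r
        exact (hglim r).const_mul (E r)
    -- positivity of the limit integral
    have hGu : ∀ t, G t ≤ β₁ := fun t => le_of_tendsto (hglim t) (Eventually.of_forall (hg1 · t))
    have hGmeas : Measurable G :=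
      measurable_of_tendsto_metrizable (fun m => hgm m) (tendsto_pi_nhds.mpr hglim)
    have hGint : IntegrableOn (fun r => E r * G r) (Iic (0:ℝ)) := by
      apply Integrable.mono' (g := fun r => E r * β₁) (hEint.mul_const _)
        ((hEc.measurable.mul hGmeas).aestronglyMeasurable).restrict
      filter_upwards with r
      rw [Real.norm_eq_abs, Pi.mul_apply, abs_of_nonneg (mul_nonneg (hEpos r).le (le_trans hβ₀.le (hGl r)))]
      exact mul_le_mul_of_nonneg_left (hGu r) (hEpos r).le
    have hIpos : 0 < ∫ r in Iic (0:ℝ), E r * G r := by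
      have hmono : β₀ * ∫ r in Iic (0:ℝ), E r ≤ ∫ r in Iic (0:ℝ), E r * G r := by
        rw [← integral_const_mul]
        apply setIntegral_mono_on ((hEint.const_mul β₀)) hGint measurableSet_Iic
        intro r _
        exact mul_le_mul_of_nonneg_left (hGl r) (hEpos r).le |>.trans_eq' (by ring)
      nlinarith
    have hcont : ContinuousAt (fun x : ℝ => (Real.sqrt (2 * x))⁻¹)
        (∫ r in Iic (0:ℝ), E r * G r) := by
      apply ContinuousAt.inv₀
      · exact (Real.continuous_sqrt.comp (continuous_const.mul continuous_id)).continuousAt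
      · exact (Real.sqrt_pos.mpr (by linarith)).ne'
    exact hcont.tendsto.comp hint
  -- main proof
  intro s
  obtain ⟨φ, hφ, h, hlim1, hlim2⟩ := hβaa s
  have hhl : ∀ t, β₀ ≤ h t := fun t =>
    ge_of_tendsto (hlim1 t) (Eventually.of_forall fun m => hβl _)
  have hhu : ∀ t, h t ≤ β₁ := fun t =>
    le_of_tendsto (hlim1 t) (Eventually.of_forall fun m => hβu _)
  have hhmeas : Measurable h :=
    measurable_of_tendsto_metrizable
      (fun m => (hβc.comp (continuous_id.add continuous_const)).measurable)
      (tendsto_pi_nhds.mpr hlim1)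
  refine ⟨φ, hφ, fun τ => (Real.sqrt (2 * ∫ r in Iic (0:ℝ), E r * h (r + τ)))⁻¹, ?_, ?_⟩
  · intro t
    exact key (fun m r => β (r + (t + s (φ m)))) (fun r => h (r + t))
      (fun m => (hβc.comp (continuous_id.add continuous_const)).measurable)
      (fun m r => le_trans hβ₀.le (hβl _))
      (fun m r => hβu _)
      (fun r => by simpa [add_assoc] using hlim1 (r + t))
      (fun r => hhl _)
  · intro t
    exact key (fun m r => h (r + (t - s (φ m)))) (fun r => β (r + t))
      (fun m => hhmeas.comp (measurable_id.add_const _))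
      (fun m r => le_trans hβ₀.le (hhl _))
      (fun m r => hhu _)
      (fun r => by
        have := hlim2 (r + t)
        convert this using 2 with m
        ring_nf)
      (fun r => hβl _)
end

section
/- Let f: ℝ × ℝ → ℝ satisfy f(t,x)·x ≤ −ν x² + h(t)|x| for all t, x, with ν > 0 and h ≥ 0. Consider pathwise solutions of dx/dt = f(t,x) + g(t) + δx∘dω/dt and of the linear equation dy/dt = −νy + |g(t)| + h(t) + δy∘dω/dt (both interpreted, after the substitution removing the noise via z = e^{−δω(t)}x, as random ODEs). If y(τ) ≥ |x(τ)| ≥ 0, then |x(t)| ≤ y(t) for all t ≥ τ. -/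
set_option autoImplicit false

open Filter Real Topology

/-- Comparison principle: after the Doss–Sussmann transformation
z = e^{-δω}x, the solution of the linear equation dominates the absolute
value of the solution of the nonlinear equation. -/
theorem stmt17
    (ω : ℝ → ℝ) (hωc : Continuous ω)
    (ν δ : ℝ) (hν : 0 < ν) (hδ : 0 < δ)
    (f : ℝ → ℝ → ℝ) (g h : ℝ → ℝ) (hhpos : ∀ t, 0 ≤ h t)
    (hf : ∀ t x : ℝ, f t x * x ≤ -ν * x ^ 2 + h t * |x|)
    (τ : ℝ) (x y : ℝ → ℝ)
    (hx : ∀ t : ℝ, HasDerivAt (fun s => Real.exp (-δ * ω s) * x s)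
      (Real.exp (-δ * ω t) * (f t (x t) + g t)) t)
    (hy : ∀ t : ℝ, HasDerivAt (fun s => Real.exp (-δ * ω s) * y s)
      (Real.exp (-δ * ω t) * (-ν * y t + |g t| + h t)) t)
    (hinit : |x τ| ≤ y τ) :
    ∀ t ≥ τ, |x t| ≤ y t := by
  set u : ℝ → ℝ := fun s => Real.exp (-δ * ω s) * x s with hu_def
  set v : ℝ → ℝ := fun s => Real.exp (-δ * ω s) * y s with hv_def
  set U' : ℝ → ℝ := fun t => Real.exp (-δ * ω t) * (f t (x t) + g t) with hU'_def
  set V' : ℝ → ℝ := fun t => Real.exp (-δ * ω t) * (-ν * y t + |g t| + h t) with hV'_def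
  have hu : ∀ t, HasDerivAt u (U' t) t := hx
  have hv : ∀ t, HasDerivAt v (V' t) t := hy
  have huabs : ∀ t, |u t| = Real.exp (-δ * ω t) * |x t| := by
    intro t
    simp [hu_def, abs_mul, abs_of_pos (Real.exp_pos _)]
  -- Step A : v is nonnegative on [τ, ∞)
  have hvnn : ∀ t ≥ τ, 0 ≤ v t := by
    intro t ht
    set w : ℝ → ℝ := fun s => Real.exp (ν * s) * v s with hw_def
    have hw : ∀ s, HasDerivAt w
        (Real.exp (ν * s) * (Real.exp (-δ * ω s) * (|g s| + h s))) s := by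
      intro s
      have h1 : HasDerivAt (fun s : ℝ => Real.exp (ν * s)) (ν * Real.exp (ν * s)) s := by
        have := (Real.hasDerivAt_exp (ν * s)).comp s ((hasDerivAt_id s).const_mul ν)
        simpa [mul_comm, Function.comp_def] using this
      have := h1.fun_mul (hv s)
      refine this.congr_deriv ?_
      simp only [hv_def, hV'_def]
      ring
    have hmono : MonotoneOn w (Set.Icc τ t) := by
      apply monotoneOn_of_hasDerivWithinAt_nonneg (convex_Icc τ t)
        (fun s _ => (hw s).continuousAt.continuousWithinAt)
        (fun s _ => (hw s).hasDerivWithinAt)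
      intro s _
      have := hhpos s
      positivity
    have h0 : 0 ≤ w τ := by
      have : 0 ≤ v τ := by
        simp only [hv_def]
        have := hinit
        nlinarith [Real.exp_pos (-δ * ω τ), abs_nonneg (x τ)]
      simp only [hw_def]
      positivity
    have := hmono (Set.left_mem_Icc.2 ht) (Set.right_mem_Icc.2 ht) ht
    have hwt : 0 ≤ w t := le_trans h0 this
    simp only [hw_def] at hwt
    nlinarith [Real.exp_pos (ν * t)]
  -- Step B : comparison
  intro b hb
  have key : ∀ ε > 0, |u b| ≤ v b + ε := by
    intro ε hε
    set F : ℝ → ℝ := fun s => |u s| with hF_def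
    set F' : ℝ → ℝ := fun s => if u s = 0 then |U' s| else (u s / |u s|) * U' s
      with hF'_def
    set B : ℝ → ℝ := fun s => v s + ε with hB_def
    have main : ∀ ⦃s⦄, s ∈ Set.Icc τ b → F s ≤ B s := by
      apply image_le_of_liminf_slope_right_lt_deriv_boundary'
        (f := F) (f' := F') (B := B) (B' := V')
      · have hcu : Continuous u := continuous_iff_continuousAt.2 fun s => (hu s).continuousAt
        exact (continuous_abs.comp hcu).continuousOn
      · -- hf' : liminf slope condition
        intro s _ r hr
        by_cases hus : u s = 0
        · have hF's : F' s = |U' s| := by simp [hF'_def, hus]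
          rw [hF's] at hr
          have htend : Tendsto (slope u s) (𝓝[>] s) (𝓝 (U' s)) := by
            have := hasDerivAt_iff_tendsto_slope.1 (hu s)
            exact this.mono_left (nhdsWithin_mono s fun z hz => ne_of_gt hz)
          have habs : Tendsto (fun z => |slope u s z|) (𝓝[>] s) (𝓝 |U' s|) :=
            (continuous_abs.tendsto _).comp htend
          have hev : ∀ᶠ z in 𝓝[>] s, |slope u s z| < r :=
            habs.eventually (eventually_lt_nhds hr)
          have heq : ∀ᶠ z in 𝓝[>] s, slope F s z = |slope u s z| := by
            filter_upwards [self_mem_nhdsWithin] with z hz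
            have hzs : (0:ℝ) < z - s := sub_pos.2 hz
            simp [hF_def, slope_def_field, hus, abs_div, abs_of_pos hzs]
          have : ∀ᶠ z in 𝓝[>] s, slope F s z < r := by
            filter_upwards [hev, heq] with z h1 h2; rw [h2]; exact h1
          exact this.frequently
        · -- u s ≠ 0 : |u| is differentiable at s
          have hd : HasDerivAt F (F' s) s := by
            rcases lt_or_gt_of_ne hus with hneg | hpos
            · have hev : F =ᶠ[nhds s] fun z => -u z := by
                have : ∀ᶠ z in nhds s, u z < 0 :=
                  (hu s).continuousAt.eventually_lt continuousAt_const hneg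
                filter_upwards [this] with z hz
                simp [hF_def, abs_of_neg hz]
              have : HasDerivAt F (-U' s) s :=
                HasDerivAt.congr_of_eventuallyEq (hu s).neg hev
              convert this using 1
              rw [hF'_def]
              simp only [if_neg hus]
              rw [abs_of_neg hneg]
              field_simp
            · have hev : F =ᶠ[nhds s] u := by
                have : ∀ᶠ z in nhds s, 0 < u z :=
                  continuousAt_const.eventually_lt (hu s).continuousAt hpos
                filter_upwards [this] with z hz
                simp [hF_def, abs_of_pos hz]
              have : HasDerivAt F (U' s) s :=
                HasDerivAt.congr_of_eventuallyEq (hu s) hev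
              convert this using 1
              rw [hF'_def]
              simp only [if_neg hus]
              rw [abs_of_pos hpos]
              field_simp
          exact hd.hasDerivWithinAt.liminf_right_slope_le hr
      · -- initial condition
        have : F τ ≤ v τ := by
          show |u τ| ≤ v τ
          rw [huabs]
          exact mul_le_mul_of_nonneg_left hinit (Real.exp_pos _).le
        simp only [hB_def]
        linarith
      · exact fun s _ => ((hv s).add_const ε).continuousAt.continuousWithinAt
      · exact fun s hs => ((hv s).add_const ε).hasDerivWithinAt
      · -- bound at equality points
        intro s hs heq
        have hvs : 0 ≤ v s := hvnn s hs.1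
        have hFs : F s = v s + ε := heq
        have hus : u s ≠ 0 := by
          intro h0
          have h1 : |u s| = v s + ε := hFs
          rw [h0, abs_zero] at h1
          linarith
        have hxs : x s ≠ 0 := by
          intro h0
          apply hus
          simp [hu_def, h0]
        set e := Real.exp (-δ * ω s) with he_def
        have hepos : 0 < e := Real.exp_pos _
        have hsgn : u s / |u s| = x s / |x s| := by
          have hus' : u s = e * x s := rfl
          rw [hus', abs_mul, abs_of_pos hepos, mul_div_mul_left _ _ (ne_of_gt hepos)]
        have hF's : F' s = (x s / |x s|) * U' s := by
          rw [hF'_def]; simp only [if_neg hus]; rw [hsgn]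
        have hxabs : 0 < |x s| := abs_pos.2 hxs
        have hstep : (x s / |x s|) * (f s (x s) + g s)
            ≤ -ν * |x s| + h s + |g s| := by
          have h1 : (x s / |x s|) * f s (x s) ≤ -ν * |x s| + h s := by
            rw [div_mul_eq_mul_div, div_le_iff₀ hxabs]
            have := hf s (x s)
            nlinarith [sq_abs (x s)]
          have h2 : (x s / |x s|) * g s ≤ |g s| := by
            rw [div_mul_eq_mul_div, div_le_iff₀ hxabs]
            calc x s * g s ≤ |x s * g s| := le_abs_self _
              _ = |g s| * |x s| := by rw [abs_mul]; ring
          calc (x s / |x s|) * (f s (x s) + g s)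
              = (x s / |x s|) * f s (x s) + (x s / |x s|) * g s := by ring
            _ ≤ (-ν * |x s| + h s) + |g s| := add_le_add h1 h2
        have hFle : F' s ≤ V' s - ν * ε := by
          rw [hF's, hU'_def, hV'_def]
          simp only
          have h3 : (x s / |x s|) * (e * (f s (x s) + g s))
              = e * ((x s / |x s|) * (f s (x s) + g s)) := by ring
          rw [← he_def, h3]
          have h4 : e * ((x s / |x s|) * (f s (x s) + g s))
              ≤ e * (-ν * |x s| + h s + |g s|) :=
            mul_le_mul_of_nonneg_left hstep hepos.le
          have h5 : e * |x s| = v s + ε := by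
            rw [← hFs]
            have h7 : |u s| = e * |x s| := huabs s
            exact h7.symm
          have h6 : e * y s = v s := rfl
          nlinarith [hepos]
        have : 0 < ν * ε := mul_pos hν hε
        linarith
    have := main (Set.mem_Icc.2 ⟨hb, le_refl b⟩)
    exact this
  have hub : |u b| ≤ v b := le_of_forall_pos_le_add key
  rw [huabs, hv_def] at hub
  exact le_of_mul_le_mul_left hub (Real.exp_pos _)
end

section
/- Let ω: ℝ → ℝ be continuous with ω(t)/t → 0 as t → ±∞, δ > 0, λ > 0, and β continuous with 0 < β₀ ≤ β ≤ β₁. Define for the transcritical equation the branch x_λ(τ, ω) = (∫_{−∞}^0 e^{λr + δω(r)} β(r+τ) dr)^{−1}. Then for every τ ∈ ℝ and every compact set K ⊂ (0, ∞), the pullback solutions of dx/dt = λx − β(t)x² + δx∘dω/dt, given explicitly by x(τ, τ−t, θ_{−τ}ω, x₀) = x₀ / (e^{−λt + δω(−t)} + x₀ ∫_{−t}^0 e^{λr + δω(r)} β(r+τ) dr), converge uniformly over x₀ ∈ K to x_λ(τ, ω) as t → ∞. -/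
set_option autoImplicit false

open MeasureTheory Filter Real Set

theorem expIic (b c : ℝ) (hb : 0 < b) : IntegrableOn (fun r => Real.exp (b * r)) (Iic c) := by
  have h2 : IntegrableOn (fun x => Real.exp (-b * x)) (Ici (-c)) :=
    (integrableOn_Ici_iff_integrableOn_Ioi).mpr (exp_neg_integrableOn_Ioi (-c) hb)
  refine (MeasurePreserving.integrableOn_comp_preimage
    (Measure.measurePreserving_neg (volume : Measure ℝ))
    (Homeomorph.neg ℝ).measurableEmbedding
    (f := fun r => Real.exp (b * r)) (s := Iic c)).1 ?_
  have he : ((fun r => Real.exp (b * r)) ∘ (Neg.neg : ℝ → ℝ)) = fun x => Real.exp (-b * x) := by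
    funext x; simp [Function.comp]
  have hs : ((Neg.neg : ℝ → ℝ) ⁻¹' (Iic c)) = Ici (-c) := by
    ext x; simp [neg_le]
  rw [he, hs]; exact h2


/-- Transcritical equation, λ > 0: the pullback solutions converge uniformly
over compact sets of positive initial data to the branch
x_λ(τ,ω) = (∫_{-∞}^0 e^{λr+δω(r)} β(r+τ) dr)⁻¹. -/
theorem stmt18
    (ω : ℝ → ℝ) (hωc : Continuous ω)
    (hωtop : Tendsto (fun t => ω t / t) atTop (nhds 0))
    (hωbot : Tendsto (fun t => ω t / t) atBot (nhds 0))
    (lam δ β₀ β₁ : ℝ) (hlam : 0 < lam) (hδ : 0 < δ)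
    (β : ℝ → ℝ) (hβc : Continuous β)
    (hβ₀ : 0 < β₀) (hβl : ∀ t, β₀ ≤ β t) (hβu : ∀ t, β t ≤ β₁)
    (τ : ℝ) (K : Set ℝ) (hK : IsCompact K) (hKpos : K ⊆ Ioi 0) :
    TendstoUniformlyOn
      (fun (t : ℝ) (x₀ : ℝ) =>
        x₀ / (Real.exp (-lam * t + δ * ω (-t)) +
          x₀ * ∫ r in Ioc (-t) (0 : ℝ), Real.exp (lam * r + δ * ω r) * β (r + τ)))
      (fun _ => (∫ r in Iic (0 : ℝ), Real.exp (lam * r + δ * ω r) * β (r + τ))⁻¹)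
      atTop K := by
  rcases K.eq_empty_or_nonempty with hKe | hKne
  · rw [hKe]; exact tendstoUniformlyOn_empty
  -- bounds on K
  obtain ⟨a, haK, hmin⟩ := hK.exists_isMinOn hKne continuous_id.continuousOn
  obtain ⟨b, hbK, hmax⟩ := hK.exists_isMaxOn hKne continuous_id.continuousOn
  have ha : (0:ℝ) < a := hKpos haK
  have hb : (0:ℝ) < b := hKpos hbK
  set g : ℝ → ℝ := fun r => Real.exp (lam * r + δ * ω r) * β (r + τ) with hg
  have hgc : Continuous g := by
    exact ((Real.continuous_exp.comp (by continuity)).mul (hβc.comp (by continuity)))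
  have hgpos : ∀ r, 0 < g r := fun r =>
    mul_pos (Real.exp_pos _) (lt_of_lt_of_le hβ₀ (hβl _))
  -- sublinear bound at -∞ : ∃ M ≤ -1, ∀ r ≤ M, |ω r| ≤ (lam/(2*δ)) * (-r)
  have hsub : ∀ᶠ r in atBot, |ω r| / |r| < lam / (2 * δ) := by
    have := hωbot
    rw [Metric.tendsto_nhds] at this
    simpa [Real.dist_eq, abs_div] using this (lam / (2 * δ)) (by positivity)
  obtain ⟨M₀, hM₀⟩ := eventually_atBot.1 hsub
  set M : ℝ := min M₀ (-1) with hM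
  have hMle : ∀ r ≤ M, lam * r + δ * ω r ≤ (lam / 2) * r := by
    intro r hr
    have hrM₀ : r ≤ M₀ := le_trans hr (min_le_left _ _)
    have hrneg : r < 0 := lt_of_le_of_lt (le_trans hr (min_le_right _ _)) (by norm_num)
    have h1 : |ω r| < (lam / (2 * δ)) * (-r) := by
      have := hM₀ r hrM₀
      have : |ω r| < (lam / (2 * δ)) * |r| := by
        rw [div_lt_iff₀ (abs_pos.mpr hrneg.ne)] at this
        linarith [this]
      simpa [abs_of_neg hrneg] using this
    have h2 : δ * ω r ≤ (lam / 2) * (-r) := by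
      have : ω r ≤ |ω r| := le_abs_self _
      have h3 : δ * ω r ≤ δ * ((lam / (2 * δ)) * (-r)) := by nlinarith
      have h4 : δ * ((lam / (2 * δ)) * (-r)) = (lam / 2) * (-r) := by
        field_simp
      linarith
    nlinarith
  -- integrability of g on Iic 0
  have hInt : IntegrableOn g (Iic (0:ℝ)) := by
    have hsplit : Iic (0:ℝ) = Iic M ∪ Icc M 0 := by
      rw [Iic_union_Icc_eq_Iic]
      exact le_trans (min_le_right _ _) (by norm_num)
    rw [hsplit]
    refine IntegrableOn.union ?_ (hgc.continuousOn.integrableOn_compact isCompact_Icc)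
    have hdom : IntegrableOn (fun r => β₁ * Real.exp ((lam/2) * r)) (Iic M) :=
      (expIic (lam/2) M (by positivity)).const_mul β₁
    have hβ₁pos : (0:ℝ) < β₁ := hβ₀.trans_le ((hβl 0).trans (hβu 0))
    refine Integrable.mono hdom (hgc.aestronglyMeasurable.restrict) ?_
    refine (ae_restrict_iff' measurableSet_Iic).2 (Eventually.of_forall fun r hr => ?_)
    have h1 : g r ≤ β₁ * Real.exp ((lam/2) * r) := by
      have hβr : β (r + τ) ≤ β₁ := hβu _
      have hβrpos : 0 < β (r + τ) := lt_of_lt_of_le hβ₀ (hβl _)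
      have := Real.exp_le_exp.2 (hMle r hr)
      calc g r ≤ Real.exp ((lam/2) * r) * β (r + τ) := by
            exact mul_le_mul_of_nonneg_right this hβrpos.le
        _ ≤ Real.exp ((lam/2) * r) * β₁ := by
            exact mul_le_mul_of_nonneg_left hβr (Real.exp_pos _).le
        _ = β₁ * Real.exp ((lam/2) * r) := mul_comm _ _
    rw [Real.norm_eq_abs, Real.norm_eq_abs, abs_of_pos (hgpos r),
      abs_of_pos (by positivity : (0:ℝ) < β₁ * Real.exp ((lam/2) * r))]
    exact h1
  set I : ℝ := ∫ r in Iic (0:ℝ), g r with hI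
  have hIpos : 0 < I := by
    rw [hI]
    rw [setIntegral_pos_iff_support_of_nonneg_ae
      (Eventually.of_forall fun r => (hgpos r).le) hInt]
    have : Function.support g = univ := by
      ext r; simp [Function.support, (hgpos r).ne']
    rw [this, univ_inter]
    simp [Real.volume_Iic]
  -- convergence of the truncated integral
  have hJ : Tendsto (fun t : ℝ => ∫ r in Ioc (-t) (0:ℝ), g r) atTop (nhds I) := by
    have h1 : Tendsto (fun t : ℝ => ∫ r in (-t)..(0:ℝ), g r) atTop (nhds I) :=
      intervalIntegral_tendsto_integral_Iic 0 hInt tendsto_neg_atTop_atBot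
    refine h1.congr' ?_
    filter_upwards [eventually_ge_atTop (0:ℝ)] with t ht
    rw [intervalIntegral.integral_of_le (by linarith)]
  -- E → 0
  have hE : Tendsto (fun t : ℝ => Real.exp (-lam * t + δ * ω (-t))) atTop (nhds 0) := by
    refine Real.tendsto_exp_atBot.comp ?_
    have hbound : ∀ᶠ t in atTop, -lam * t + δ * ω (-t) ≤ -(lam/2) * t := by
      filter_upwards [eventually_ge_atTop (max 1 (-M))] with t ht
      have htM : -t ≤ M := by
        have : -M ≤ t := le_trans (le_max_right _ _) ht
        linarith
      have := hMle (-t) htM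
      nlinarith [this]
    refine tendsto_atBot_mono' atTop hbound ?_
    exact (tendsto_id.const_mul_atTop_of_neg (by linarith : -(lam/2) < 0))
  -- main estimate
  rw [Metric.tendstoUniformlyOn_iff]
  intro ε hε
  set c : ℝ := ε * (I * (a * I / 2)) / 2 with hc
  have hcpos : 0 < c := by
    rw [hc]
    exact div_pos (mul_pos hε (mul_pos hIpos (div_pos (mul_pos ha hIpos) two_pos))) two_pos
  have hc2pos : 0 < min (I/2) (c / b) := lt_min (half_pos hIpos) (div_pos hcpos hb)
  filter_upwards [hE.eventually_lt_const hcpos,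
    (Metric.tendsto_nhds.1 hJ) _ hc2pos] with t hEt hJt x₀ hx₀
  set E : ℝ := Real.exp (-lam * t + δ * ω (-t)) with hEdef
  set J : ℝ := ∫ r in Ioc (-t) (0:ℝ), g r with hJdef
  have hEpos : 0 < E := Real.exp_pos _
  have hJI : |J - I| < min (I/2) (c / b) := by
    rw [Real.dist_eq] at hJt; exact hJt
  have hJhalf : I / 2 < J := by
    have h1 : |J - I| < I / 2 := lt_of_lt_of_le hJI (min_le_left _ _)
    have := abs_lt.1 h1
    linarith [this.1]
  have hax : a ≤ x₀ := hmin hx₀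
  have hxb : x₀ ≤ b := hmax hx₀
  have hx₀pos : 0 < x₀ := hKpos hx₀
  have hJpos : 0 < J := (half_pos hIpos).trans hJhalf
  have hD : 0 < E + x₀ * J := add_pos hEpos (mul_pos hx₀pos hJpos)
  have hDge : I * (a * I / 2) ≤ I * ((E + x₀ * J)) := by
    have : a * (I/2) ≤ x₀ * J :=
      mul_le_mul hax hJhalf.le (by positivity) (by linarith)
    nlinarith
  have hnum : |E + x₀ * (J - I)| < 2 * c := by
    have h1 : |x₀ * (J - I)| ≤ b * (c / b) := by
      rw [abs_mul, abs_of_pos hx₀pos]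
      exact mul_le_mul hxb (le_of_lt (lt_of_lt_of_le hJI (min_le_right _ _)))
        (abs_nonneg _) hb.le
    have h2 : b * (c / b) = c := by field_simp
    calc |E + x₀ * (J - I)| ≤ |E| + |x₀ * (J - I)| := abs_add_le _ _
      _ < c + c := by rw [abs_of_pos hEpos]; linarith [h1, h2 ▸ h1]
      _ = 2 * c := by ring
  have hkey : I⁻¹ - x₀ / (E + x₀ * J) = (E + x₀ * (J - I)) / (I * (E + x₀ * J)) := by
    field_simp
    ring
  rw [Real.dist_eq]
  have : |(fun _ => I⁻¹) x₀ - x₀ / (E + x₀ * J)| < ε := by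
    show |I⁻¹ - x₀ / (E + x₀ * J)| < ε
    rw [hkey, abs_div, abs_of_pos (mul_pos hIpos hD)]
    rw [div_lt_iff₀ (mul_pos hIpos hD)]
    calc |E + x₀ * (J - I)| < 2 * c := hnum
      _ = ε * (I * (a * I / 2)) := by rw [hc]; ring
      _ ≤ ε * (I * (E + x₀ * J)) := by
          exact mul_le_mul_of_nonneg_left hDge hε.le
  exact this
end

section
/- Let ω: ℝ → ℝ be continuous with ω(t)/t → 0 as t → ±∞, δ > 0, λ < 0, and β continuous with 0 < β₀ ≤ β ≤ β₁. Then for every τ ∈ ℝ and every compact K ⊂ (0, ∞), sup_{x₀ ∈ K} x(τ, τ−t, θ_{−τ}ω, x₀) → 0 as t → ∞, where x(τ, τ−t, θ_{−τ}ω, x₀) = x₀ / (e^{−λt + δω(−t)} + x₀ ∫_{−t}^0 e^{λr + δω(r)} β(r+τ) dr). Moreover, defining x_λ(τ, ω) = −(∫_0^∞ e^{λr + δω(r)} β(r+τ) dr)^{−1} < 0, one has x_λ(τ, ω) → 0 as λ → 0⁻ provided ∫_0^∞ e^{δω(r)} dr = ∞. -/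
set_option autoImplicit false

open MeasureTheory Filter Real Set
open scoped ENNReal

-- Helper: for l < 0, integrability on Ici 0
lemma helperA (ω : ℝ → ℝ) (hωc : Continuous ω)
    (hωtop : Tendsto (fun t => ω t / t) atTop (nhds 0))
    (δ β₀ β₁ : ℝ) (hδ : 0 < δ)
    (β : ℝ → ℝ) (hβc : Continuous β)
    (hβ₀ : 0 < β₀) (hβl : ∀ t, β₀ ≤ β t) (hβu : ∀ t, β t ≤ β₁) (τ : ℝ)
    (l : ℝ) (hl : l < 0) :
    IntegrableOn (fun r => Real.exp (l * r + δ * ω r) * β (r + τ)) (Ici 0) := by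
  have hβ₁ : 0 < β₁ := lt_of_lt_of_le hβ₀ ((hβl 0).trans (hβu 0))
  have hε : 0 < -l / (2 * δ) := div_pos (by linarith) (by linarith)
  have h1 : ∀ᶠ t in atTop, |ω t / t| < -l / (2 * δ) := by
    filter_upwards [Metric.tendsto_nhds.mp hωtop _ hε] with t ht
    rwa [Real.dist_eq, sub_zero] at ht
  obtain ⟨T, hT⟩ := (h1.and (eventually_ge_atTop (1:ℝ))).exists_forall_of_atTop
  have hT1 : (1:ℝ) ≤ T := (hT T le_rfl).2
  have hbound : ∀ r ≥ T, l * r + δ * ω r ≤ l / 2 * r := by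
    intro r hr
    have hr1 : (1:ℝ) ≤ r := hT1.trans hr
    have hrpos : 0 < r := lt_of_lt_of_le one_pos hr1
    have h2 : |ω r| < -l / (2 * δ) * r := by
      have h := (hT r hr).1
      rw [abs_div, abs_of_pos hrpos, div_lt_iff₀ hrpos] at h
      exact h
    have h3 : δ * ω r ≤ -l / 2 * r := by
      have : ω r ≤ -l / (2 * δ) * r := (le_abs_self _).trans h2.le
      calc δ * ω r ≤ δ * (-l / (2 * δ) * r) := by
            exact mul_le_mul_of_nonneg_left this hδ.le
        _ = -l / 2 * r := by field_simp
    nlinarith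
  have hcont : Continuous (fun r => Real.exp (l * r + δ * ω r) * β (r + τ)) := by
    fun_prop
  have hIcc : IntegrableOn (fun r => Real.exp (l * r + δ * ω r) * β (r + τ)) (Icc 0 T) :=
    hcont.integrableOn_Icc
  have hIoi : IntegrableOn (fun r => Real.exp (l * r + δ * ω r) * β (r + τ)) (Ioi T) := by
    have hg : IntegrableOn (fun r => β₁ * Real.exp (-(-(l/2)) * r)) (Ioi T) :=
      (exp_neg_integrableOn_Ioi T (by linarith)).const_mul β₁
    refine Integrable.mono' hg hcont.aestronglyMeasurable ?_
    filter_upwards [ae_restrict_mem measurableSet_Ioi] with r hr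
    have hb := hbound r (le_of_lt hr)
    have h0 : 0 < β (r + τ) := lt_of_lt_of_le hβ₀ (hβl _)
    rw [Real.norm_eq_abs, abs_of_pos (by positivity)]
    have : Real.exp (l * r + δ * ω r) ≤ Real.exp (-(-(l/2)) * r) := by
      apply Real.exp_le_exp.2; simpa using hb
    calc Real.exp (l * r + δ * ω r) * β (r + τ)
        ≤ Real.exp (-(-(l/2)) * r) * β₁ :=
          mul_le_mul this (hβu _) h0.le (Real.exp_pos _).le
      _ = β₁ * Real.exp (-(-(l/2)) * r) := mul_comm _ _
  exact (hIcc.union hIoi).mono_set (fun r hr => by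
    rcases le_or_gt r T with h | h
    · exact Or.inl ⟨hr, h⟩
    · exact Or.inr h)

lemma helperB (ω : ℝ → ℝ) (hωc : Continuous ω)
    (hωbot : Tendsto (fun t => ω t / t) atBot (nhds 0))
    (lam δ β₀ β₁ : ℝ) (hlam : lam < 0) (hδ : 0 < δ)
    (β : ℝ → ℝ) (hβc : Continuous β)
    (hβ₀ : 0 < β₀) (hβl : ∀ t, β₀ ≤ β t) (hβu : ∀ t, β t ≤ β₁) (τ : ℝ) :
    Tendsto (fun t => ∫ r in Ioc (-t) (0:ℝ), Real.exp (lam * r + δ * ω r) * β (r + τ))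
      atTop atTop := by
  have hε : 0 < -lam / (2 * δ) := div_pos (by linarith) (by linarith)
  have h1 : ∀ᶠ t in atBot, |ω t / t| < -lam / (2 * δ) := by
    filter_upwards [Metric.tendsto_nhds.mp hωbot _ hε] with t ht
    rwa [Real.dist_eq, sub_zero] at ht
  obtain ⟨T, hT⟩ := (h1.and (eventually_le_atBot (-1 : ℝ))).exists_forall_of_atBot
  have hT1 : T ≤ -1 := (hT T le_rfl).2
  -- for r ≤ T : exponent nonneg
  have hbound : ∀ r ≤ T, 0 ≤ lam * r + δ * ω r := by
    intro r hr
    have hrneg : r < 0 := lt_of_le_of_lt (hr.trans hT1) (by norm_num)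
    have h := (hT r hr).1
    rw [abs_div, abs_of_neg hrneg, div_lt_iff₀ (by linarith)] at h
    have h3 : -(δ * ω r) ≤ -lam / 2 * (-r) := by
      have h6 : -ω r ≤ |ω r| := neg_le_abs _
      have h4 : δ * (-ω r) ≤ δ * (-lam / (2 * δ) * (-r)) :=
        mul_le_mul_of_nonneg_left (h6.trans h.le) hδ.le
      have h5 : δ * (-lam / (2 * δ) * (-r)) = -lam / 2 * (-r) := by
        field_simp
      linarith
    nlinarith [mul_pos (neg_pos.2 hlam) (neg_pos.2 hrneg)]
  have hcont : Continuous (fun r => Real.exp (lam * r + δ * ω r) * β (r + τ)) := by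
    fun_prop
  have hnn : ∀ r, 0 ≤ Real.exp (lam * r + δ * ω r) * β (r + τ) := fun r =>
    mul_nonneg (Real.exp_pos _).le (le_trans hβ₀.le (hβl _))
  -- lower bound: for t ≥ -T, B t ≥ β₀ * (t + T)... careful: Ioc (-t) T has measure T + t
  have key : ∀ t : ℝ, -T ≤ t →
      β₀ * (T + t) ≤ ∫ r in Ioc (-t) (0:ℝ), Real.exp (lam * r + δ * ω r) * β (r + τ) := by
    intro t ht
    have hsub : Ioc (-t) T ⊆ Ioc (-t) (0:ℝ) := Ioc_subset_Ioc le_rfl (by linarith)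
    have hint : IntegrableOn (fun r => Real.exp (lam * r + δ * ω r) * β (r + τ))
        (Ioc (-t) (0:ℝ)) := hcont.integrableOn_Ioc
    have step1 : ∫ r in Ioc (-t) T, Real.exp (lam * r + δ * ω r) * β (r + τ)
        ≤ ∫ r in Ioc (-t) (0:ℝ), Real.exp (lam * r + δ * ω r) * β (r + τ) :=
      setIntegral_mono_set hint (Eventually.of_forall fun r => hnn r) (HasSubset.Subset.eventuallyLE hsub)
    have step2 : β₀ * (T + t) ≤ ∫ r in Ioc (-t) T, Real.exp (lam * r + δ * ω r) * β (r + τ) := by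
      have hc : ∫ r in Ioc (-t) T, (β₀ : ℝ) = β₀ * (T + t) := by
        rw [setIntegral_const, smul_eq_mul, Measure.real, Real.volume_Ioc]
        rw [ENNReal.toReal_ofReal (by linarith)]
        ring
      rw [← hc]
      apply setIntegral_mono_on (integrableOn_const (by simp [Real.volume_Ioc]))
        (hcont.integrableOn_Ioc) measurableSet_Ioc
      intro r hr
      have h0 := hbound r hr.2
      calc (β₀ : ℝ) = 1 * β₀ := (one_mul _).symm
        _ ≤ Real.exp (lam * r + δ * ω r) * β (r + τ) :=
          mul_le_mul (by simpa using Real.one_le_exp h0) (hβl _) hβ₀.le (Real.exp_pos _).le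
    linarith
  have hf : Tendsto (fun t : ℝ => β₀ * (T + t)) atTop atTop :=
    (tendsto_atTop_add_const_left _ (β₀ * T) ((tendsto_id.const_mul_atTop hβ₀))).congr
      (fun t => by simp [id]; ring)
  refine tendsto_atTop_mono' atTop ?_ hf
  filter_upwards [eventually_ge_atTop (-T)] with t ht
  exact key t ht

lemma helperC (ω : ℝ → ℝ) (hωc : Continuous ω) (δ : ℝ)
    (hdiv : ∫⁻ r in Ici (0 : ℝ), ENNReal.ofReal (Real.exp (δ * ω r)) = ⊤) :
    ∀ C : ℝ, ∃ n : ℕ, 0 < n ∧ C < ∫ r in Ioc (0:ℝ) (n:ℝ), Real.exp (δ * ω r) := by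
  intro C
  set F : ℝ → ℝ≥0∞ := fun r => ENNReal.ofReal (Real.exp (δ * ω r)) with hF
  have hFm : Measurable F := by
    apply Measurable.ennreal_ofReal
    fun_prop
  have hIoi : ∫⁻ r in Ioi (0:ℝ), F r = ⊤ := by
    rw [← hdiv]
    exact setLIntegral_congr Ioi_ae_eq_Ici
  have hsup : (⨆ n : ℕ, ∫⁻ r in Ioc (0:ℝ) (n:ℝ), F r) = ⊤ := by
    have hmono : Monotone (fun n : ℕ => (Ioc (0:ℝ) (n:ℝ)).indicator F) := by
      intro m n hmn
      apply indicator_le_indicator_of_subset (Ioc_subset_Ioc le_rfl (by exact_mod_cast hmn))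
      intro x; exact zero_le
    have hptw : ∀ x, (⨆ n : ℕ, (Ioc (0:ℝ) (n:ℝ)).indicator F x) = (Ioi (0:ℝ)).indicator F x := by
      intro x
      rcases le_or_gt x 0 with hx | hx
      · simp [indicator_of_notMem, hx, not_lt.2 hx, mem_Ioc, mem_Ioi]
      · obtain ⟨n, hn⟩ := exists_nat_ge x
        apply le_antisymm
        · exact iSup_le fun n => indicator_le_indicator_of_subset Ioc_subset_Ioi_self
            (fun x => zero_le) x
        · calc (Ioi (0:ℝ)).indicator F x = F x := indicator_of_mem hx F
            _ = (Ioc (0:ℝ) (n:ℝ)).indicator F x := (indicator_of_mem (show x ∈ Ioc (0:ℝ) (n:ℝ) from ⟨hx, hn⟩) F).symm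
            _ ≤ _ := le_iSup (fun n : ℕ => (Ioc (0:ℝ) (n:ℝ)).indicator F x) n
    calc (⨆ n : ℕ, ∫⁻ r in Ioc (0:ℝ) (n:ℝ), F r)
        = ⨆ n : ℕ, ∫⁻ r, (Ioc (0:ℝ) (n:ℝ)).indicator F r := by
          refine iSup_congr fun n => ?_
          rw [lintegral_indicator measurableSet_Ioc]
      _ = ∫⁻ r, ⨆ n : ℕ, (Ioc (0:ℝ) (n:ℝ)).indicator F r := by
          rw [lintegral_iSup (fun n => hFm.indicator measurableSet_Ioc) hmono]
      _ = ∫⁻ r, (Ioi (0:ℝ)).indicator F r := by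
          refine lintegral_congr fun r => hptw r
      _ = ∫⁻ r in Ioi (0:ℝ), F r := lintegral_indicator measurableSet_Ioi F
      _ = ⊤ := hIoi
  have hlt : ENNReal.ofReal (max C 0) < ⨆ n : ℕ, ∫⁻ r in Ioc (0:ℝ) (n:ℝ), F r := by
    rw [hsup]; exact ENNReal.ofReal_lt_top
  obtain ⟨n, hn⟩ := lt_iSup_iff.mp hlt
  have hint : IntegrableOn (fun r => Real.exp (δ * ω r)) (Ioc (0:ℝ) (n:ℝ)) := by
    apply Continuous.integrableOn_Ioc; fun_prop
  have heq : ∫⁻ r in Ioc (0:ℝ) (n:ℝ), F r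
      = ENNReal.ofReal (∫ r in Ioc (0:ℝ) (n:ℝ), Real.exp (δ * ω r)) := by
    rw [← ofReal_integral_eq_lintegral_ofReal hint
      (ae_of_all _ fun r => (Real.exp_pos _).le)]
  rw [heq] at hn
  have hC : max C 0 < ∫ r in Ioc (0:ℝ) (n:ℝ), Real.exp (δ * ω r) :=
    (ENNReal.ofReal_lt_ofReal_iff_of_nonneg (le_max_right _ _)).mp hn
  refine ⟨max n 1, by omega, ?_⟩
  have hle : ∫ r in Ioc (0:ℝ) (n:ℝ), Real.exp (δ * ω r)
      ≤ ∫ r in Ioc (0:ℝ) ((max n 1 : ℕ):ℝ), Real.exp (δ * ω r) := by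
    apply setIntegral_mono_set (by apply Continuous.integrableOn_Ioc; fun_prop)
      (ae_of_all _ fun r => (Real.exp_pos _).le)
    apply HasSubset.Subset.eventuallyLE
    exact Ioc_subset_Ioc le_rfl (by exact_mod_cast le_max_left n 1)
  exact lt_of_le_of_lt (le_max_left _ _) (lt_of_lt_of_le hC hle)



/-- Transcritical equation, stable side λ < 0: pullback solutions with
positive initial data in a compact set converge uniformly to 0; the negative
branch x_λ(τ,ω) = -(∫_0^∞ e^{λr+δω(r)} β(r+τ) dr)⁻¹ is negative and tends to
0 as λ → 0⁻ (given ∫_0^∞ e^{δω(r)} dr = ∞). -/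
theorem stmt19
    (ω : ℝ → ℝ) (hωc : Continuous ω)
    (hωtop : Tendsto (fun t => ω t / t) atTop (nhds 0))
    (hωbot : Tendsto (fun t => ω t / t) atBot (nhds 0))
    (lam δ β₀ β₁ : ℝ) (hlam : lam < 0) (hδ : 0 < δ)
    (β : ℝ → ℝ) (hβc : Continuous β)
    (hβ₀ : 0 < β₀) (hβl : ∀ t, β₀ ≤ β t) (hβu : ∀ t, β t ≤ β₁)
    (hdiv : ∫⁻ r in Ici (0 : ℝ), ENNReal.ofReal (Real.exp (δ * ω r)) = ⊤)
    (τ : ℝ) :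
    (∀ K : Set ℝ, IsCompact K → K ⊆ Ioi 0 →
      TendstoUniformlyOn
        (fun (t : ℝ) (x₀ : ℝ) =>
          x₀ / (Real.exp (-lam * t + δ * ω (-t)) +
            x₀ * ∫ r in Ioc (-t) (0 : ℝ), Real.exp (lam * r + δ * ω r) * β (r + τ)))
        (fun _ => 0) atTop K) ∧
    (-(∫ r in Ici (0 : ℝ), Real.exp (lam * r + δ * ω r) * β (r + τ))⁻¹ < 0) ∧
    Tendsto
      (fun l : ℝ =>
        -(∫ r in Ici (0 : ℝ), Real.exp (l * r + δ * ω r) * β (r + τ))⁻¹)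
      (nhdsWithin 0 (Iio 0)) (nhds 0) := by
  have hA := fun (l : ℝ) (hl : l < 0) =>
    helperA ω hωc hωtop δ β₀ β₁ hδ β hβc hβ₀ hβl hβu τ l hl
  have hB := helperB ω hωc hωbot lam δ β₀ β₁ hlam hδ β hβc hβ₀ hβl hβu τ
  have hC := helperC ω hωc δ hdiv
  refine ⟨?_, ?_, ?_⟩
  · -- Part 1
    intro K _hK hKsub
    rw [Metric.tendstoUniformlyOn_iff]
    intro ε hε
    filter_upwards [hB.eventually_gt_atTop (max ε⁻¹ 0)] with t ht x hx
    have hx0 : 0 < x := hKsub hx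
    set Bt := ∫ r in Ioc (-t) (0:ℝ), Real.exp (lam * r + δ * ω r) * β (r + τ) with hBt
    have hB0 : 0 < Bt := lt_of_le_of_lt (le_max_right _ _) ht
    have hA0 : 0 < Real.exp (-lam * t + δ * ω (-t)) := Real.exp_pos _
    have hden : x * Bt < Real.exp (-lam * t + δ * ω (-t)) + x * Bt := by linarith
    have hxB : 0 < x * Bt := mul_pos hx0 hB0
    have hf : x / (Real.exp (-lam * t + δ * ω (-t)) + x * Bt) < Bt⁻¹ := by
      calc x / (Real.exp (-lam * t + δ * ω (-t)) + x * Bt)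
          < x / (x * Bt) := by
            apply div_lt_div_of_pos_left hx0 hxB hden
        _ = Bt⁻¹ := by field_simp
    have hfpos : 0 < x / (Real.exp (-lam * t + δ * ω (-t)) + x * Bt) :=
      div_pos hx0 (by linarith)
    rw [dist_comm, Real.dist_eq, sub_zero, abs_of_pos hfpos]
    have hinv : Bt⁻¹ < ε := by
      have h1 : ε⁻¹ < Bt := lt_of_le_of_lt (le_max_left _ _) ht
      rw [← inv_inv ε]
      exact inv_strictAnti₀ (inv_pos.2 hε) h1
    linarith
  · -- Part 2
    have hpos : 0 < ∫ r in Ici (0:ℝ), Real.exp (lam * r + δ * ω r) * β (r + τ) := by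
      rw [setIntegral_pos_iff_support_of_nonneg_ae]
      · have : Function.support (fun r => Real.exp (lam * r + δ * ω r) * β (r + τ)) = univ := by
          ext r
          simp only [Function.mem_support, mem_univ, iff_true]
          exact ne_of_gt (mul_pos (Real.exp_pos _) (lt_of_lt_of_le hβ₀ (hβl _)))
        rw [this, univ_inter]
        simp
      · exact ae_of_all _ fun r => mul_nonneg (Real.exp_pos _).le (lt_of_lt_of_le hβ₀ (hβl _)).le
      · exact hA lam hlam
    simp only [neg_lt, neg_zero]
    exact inv_pos.2 hpos
  · -- Part 3
    have hItop : Tendsto (fun l : ℝ => ∫ r in Ici (0:ℝ), Real.exp (l * r + δ * ω r) * β (r + τ))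
        (nhdsWithin 0 (Iio 0)) atTop := by
      rw [tendsto_atTop]
      intro C
      obtain ⟨n, hn0, hn⟩ := hC (2 * max C 1 / β₀)
      have hnR : (0:ℝ) < n := by exact_mod_cast hn0
      set l₀ : ℝ := -(Real.log 2) / n with hl₀
      have hl₀neg : l₀ < 0 := div_neg_of_neg_of_pos (neg_neg_iff_pos.mpr (Real.log_pos one_lt_two)) hnR
      have hmem : Ioo l₀ 0 ∈ nhdsWithin (0:ℝ) (Iio 0) :=
        Ioo_mem_nhdsLT_of_mem ⟨hl₀neg, le_rfl⟩
      filter_upwards [hmem] with l hl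
      obtain ⟨hll, hl0⟩ := hl
      have hintl : IntegrableOn (fun r => Real.exp (l * r + δ * ω r) * β (r + τ)) (Ici 0) :=
        hA l hl0
      have hnn : ∀ r : ℝ, 0 ≤ Real.exp (l * r + δ * ω r) * β (r + τ) := fun r =>
        mul_nonneg (Real.exp_pos _).le (lt_of_lt_of_le hβ₀ (hβl _)).le
      have step1 : ∫ r in Ioc (0:ℝ) (n:ℝ), Real.exp (l * r + δ * ω r) * β (r + τ)
          ≤ ∫ r in Ici (0:ℝ), Real.exp (l * r + δ * ω r) * β (r + τ) :=
        setIntegral_mono_set hintl (ae_of_all _ hnn)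
          (HasSubset.Subset.eventuallyLE (Ioc_subset_Icc_self.trans Icc_subset_Ici_self))
      have step2 : ∫ r in Ioc (0:ℝ) (n:ℝ), β₀ / 2 * Real.exp (δ * ω r)
          ≤ ∫ r in Ioc (0:ℝ) (n:ℝ), Real.exp (l * r + δ * ω r) * β (r + τ) := by
        apply setIntegral_mono_on
        · exact ((continuous_const.mul (Real.continuous_exp.comp (continuous_const.mul hωc))).integrableOn_Ioc)
        · exact Continuous.integrableOn_Ioc (by fun_prop)
        · exact measurableSet_Ioc
        · intro r hr
          have h1 : l₀ * n ≤ l * r := by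
            have h2 : l * n ≤ l * r := mul_le_mul_of_nonpos_left hr.2 hl0.le
            have h3 : l₀ * n ≤ l * n := mul_le_mul_of_nonneg_right hll.le hnR.le
            linarith
          have h4 : (2:ℝ)⁻¹ ≤ Real.exp (l * r) := by
            have : l₀ * n = -(Real.log 2) := by
              rw [hl₀]; exact div_mul_cancel₀ _ (ne_of_gt hnR)
            calc (2:ℝ)⁻¹ = Real.exp (-(Real.log 2)) := by
                  rw [Real.exp_neg, Real.exp_log two_pos]
              _ ≤ Real.exp (l * r) := Real.exp_le_exp.2 (this ▸ h1)
          calc β₀ / 2 * Real.exp (δ * ω r) = 2⁻¹ * Real.exp (δ * ω r) * β₀ := by ring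
            _ ≤ Real.exp (l * r) * Real.exp (δ * ω r) * β (r + τ) := by
                apply mul_le_mul _ (hβl _) hβ₀.le
                  (mul_nonneg (Real.exp_pos _).le (Real.exp_pos _).le)
                exact mul_le_mul_of_nonneg_right h4 (Real.exp_pos _).le
            _ = Real.exp (l * r + δ * ω r) * β (r + τ) := by rw [← Real.exp_add]
      have step3 : C ≤ ∫ r in Ioc (0:ℝ) (n:ℝ), β₀ / 2 * Real.exp (δ * ω r) := by
        rw [integral_const_mul]
        have : 2 * max C 1 / β₀ ≤ ∫ r in Ioc (0:ℝ) (n:ℝ), Real.exp (δ * ω r) := hn.le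
        have h5 : 2 * max C 1 / β₀ * (β₀ / 2) ≤ (∫ r in Ioc (0:ℝ) (n:ℝ), Real.exp (δ * ω r)) * (β₀ / 2) :=
          mul_le_mul_of_nonneg_right this (by positivity)
        have h6 : 2 * max C 1 / β₀ * (β₀ / 2) = max C 1 := by field_simp
        calc C ≤ max C 1 := le_max_left _ _
          _ ≤ _ := by rw [← h6]; linarith [h5]
      linarith
    have := (tendsto_inv_atTop_zero.comp hItop).neg
    simpa using this
end
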